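/- arXiv:1211.1714 — 4 statements merged into one kernel-verified Lean document; each statement's English description precedes it below -/
import Mathlib

section
/- For every natural number k ≥ 0, the minimum number of vertices on a path in P^k connecting two distinct 2-valent vertices of P^k equals 4^{k+1}. -/
open SimpleGraph

/-- Degree of a vertex, via the cardinality of its neighbor set. -/
noncomputable def hdeg {V : Type*} (G : SimpleGraph V) (v : V) : ℕ :=
  {w | G.Adj v w}.ncard

/-- A cubic graph: every vertex has degree 3. -/
def IsCubic {V : Type*} (G : SimpleGraph V) : Prop := ∀ v, hdeg G v = 3

/-- A 2-connected graph: at least 3 vertices and deleting any vertex leaves it connected. -/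
def TwoConnected {V : Type*} (G : SimpleGraph V) : Prop :=
  3 ≤ Nat.card V ∧ ∀ v : V, (G.induce {v}ᶜ).Connected

/-- A 3-connected graph: at least 4 vertices and deleting any two vertices leaves it connected. -/
def ThreeConnected {V : Type*} (G : SimpleGraph V) : Prop :=
  4 ≤ Nat.card V ∧ ∀ v w : V, v ≠ w → (G.induce ({v, w} : Set V)ᶜ).Connected

/-- Edge list of the Petersen graph on `Fin 10` (vertex 9 has neighbors 4, 6, 7). -/
def petEdges : List (Fin 10 × Fin 10) :=
  [(0,1),(1,2),(2,3),(3,4),(4,0),(0,5),(1,6),(2,7),(3,8),(4,9),(5,7),(7,9),(9,6),(6,8),(8,5)]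

/-- The Petersen graph `P₁₀`. -/
def Pet : SimpleGraph (Fin 10) := SimpleGraph.fromRel (fun a b => (a, b) ∈ petEdges)

/-- Edge list of `P = P₁₀ - z` on `Fin 9` (where `z` was vertex 9);
its three 2-valent vertices are 4, 6, 7. -/
def pEdges : List (Fin 9 × Fin 9) :=
  [(0,1),(1,2),(2,3),(3,4),(4,0),(0,5),(1,6),(2,7),(3,8),(5,7),(6,8),(8,5)]

/-- The graph `P = P₁₀ - z`, the Petersen graph minus one vertex. -/
def Pgr : SimpleGraph (Fin 9) := SimpleGraph.fromRel (fun a b => (a, b) ∈ pEdges)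

/-- The three 2-valent vertices of `P` (as targets of the port assignment). -/
def portIdx : ℕ → Fin 9
  | 0 => 4
  | 1 => 6
  | _ => 7

/-- Port assignment: to which 2-valent vertex of the copy of `P` replacing `u` the
neighbor `v` of `u` gets attached (neighbors are ordered by the injective encoding `enc`). -/
noncomputable def port {V : Type*} (G : SimpleGraph V) (enc : V → ℕ) (u v : V) : Fin 9 :=
  portIdx (Nat.card {w : V | G.Adj u w ∧ enc w < enc v})

/-- Simultaneous `P`-inflation at every vertex of `G`. -/
noncomputable def inflate {V : Type*} (G : SimpleGraph V) (enc : V → ℕ) :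
    SimpleGraph (V × Fin 9) where
  Adj a b :=
    (a.1 = b.1 ∧ Pgr.Adj a.2 b.2) ∨
    (G.Adj a.1 b.1 ∧ a.2 = port G enc a.1 b.1 ∧ b.2 = port G enc b.1 a.1)
  symm := by
    constructor
    rintro a b (⟨h1, h2⟩ | ⟨h1, h2, h3⟩)
    · exact Or.inl ⟨h1.symm, h2.symm⟩
    · exact Or.inr ⟨h1.symm, h3, h2⟩
  loopless := by
    constructor
    rintro a (⟨-, h⟩ | ⟨h, -, -⟩)
    · exact Pgr.irrefl h
    · exact G.irrefl h

/-- A graph bundled with an injective-style encoding of its vertices into `ℕ`. -/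
structure GE where
  V : Type
  G : SimpleGraph V
  enc : V → ℕ

/-- One round of simultaneous `P`-inflation. -/
noncomputable def step (A : GE) : GE :=
  ⟨A.V × Fin 9, inflate A.G A.enc, fun p => Nat.pair (A.enc p.1) p.2.val⟩

/-- The iterated Petersen graph `P₁₀ᵏ`. -/
noncomputable def ItP10 : ℕ → GE
  | 0 => ⟨Fin 10, Pet, Fin.val⟩
  | k + 1 => step (ItP10 k)

/-- The iterated graph `Pᵏ` (starting from `P = P₁₀ - z`). -/
noncomputable def ItP : ℕ → GE
  | 0 => ⟨Fin 9, Pgr, Fin.val⟩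
  | k + 1 => step (ItP k)

/-- The canonical copy of `P^{k-1}` in `P₁₀ᵏ` containing a given vertex,
recorded by the corresponding vertex of `P₁₀`. -/
noncomputable def baseOf : (k : ℕ) → (ItP10 k).V → Fin 10
  | 0 => id
  | k + 1 => fun p => baseOf k p.1

/-- The parameter `l(G)`: minimum over circuits `C` of the maximum over vertices `v`
of the distance `d(C, v)`. -/
noncomputable def ell {V : Type*} (G : SimpleGraph V) : ℕ :=
  sInf { n | ∃ (v : V) (w : G.Walk v v), w.IsCycle ∧ ∀ u : V, ∃ x ∈ w.support, G.dist x u ≤ n }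

/-- `M` is a matching of `G`: a set of edges of `G`, pairwise not sharing a vertex. -/
def IsMatchingSet {V : Type*} (G : SimpleGraph V) (M : Set (Sym2 V)) : Prop :=
  M ⊆ G.edgeSet ∧ ∀ e ∈ M, ∀ f ∈ M, e ≠ f → ∀ v : V, ¬(v ∈ e ∧ v ∈ f)

/-- Every connected component of `H` has an even number of vertices. -/
def EvenComponents {V : Type*} (H : SimpleGraph V) : Prop :=
  ∀ c : H.ConnectedComponent, Even c.supp.ncard

/-- An `f`-matching: a matching `M` such that every component of `G - M` is
2-connected and has an even number of vertices. -/
def IsFMatching {V : Type*} (G : SimpleGraph V) (M : Set (Sym2 V)) : Prop :=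
  IsMatchingSet G M ∧
    ∀ c : (G.deleteEdges M).ConnectedComponent,
      TwoConnected ((G.deleteEdges M).induce c.supp) ∧ Even c.supp.ncard

/-- A minimal edge cut of `G`: deleting it disconnects `G`, but deleting any
proper subset does not. -/
def IsMinEdgeCut {V : Type*} (G : SimpleGraph V) (E : Set (Sym2 V)) : Prop :=
  E ⊆ G.edgeSet ∧ ¬(G.deleteEdges E).Connected ∧
    ∀ F : Set (Sym2 V), F ⊂ E → (G.deleteEdges F).Connected

/-- `H` is a subdivision of `F`: the vertices of `F` embed into `H` and each edge of `F`
corresponds to a path in `H`, the paths being internally disjoint and covering `H`. -/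
def IsSubdivisionOf {W U : Type*} (H : SimpleGraph W) (F : SimpleGraph U) : Prop :=
  ∃ f : U ↪ W, ∃ p : ∀ u v : U, F.Adj u v → H.Walk (f u) (f v),
    (∀ u v h, (p u v h).IsPath) ∧
    (∀ u v h, ∀ w ∈ (p u v h).support, w ∈ Set.range f → w = f u ∨ w = f v) ∧
    (∀ e : Sym2 W, e ∈ H.edgeSet ↔ ∃ u v h, e ∈ (p u v h).edges) ∧
    (∀ w : W, w ∈ Set.range f ∨ ∃ u v h, w ∈ (p u v h).support) ∧
    (∀ u v h u' v' h', ∀ w : W,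
      w ∈ (p u v h).support → w ∈ (p u' v' h').support →
      w ∈ Set.range f ∨ (u = u' ∧ v = v') ∨ (u = v' ∧ v = u'))

/-- Each component of `F` is an even circuit or a 2-connected cubic graph. -/
def GoodFrameComponents {U : Type*} (F : SimpleGraph U) : Prop :=
  ∀ c : F.ConnectedComponent,
    ((F.induce c.supp).Connected ∧ (∀ v, hdeg (F.induce c.supp) v = 2) ∧ Even c.supp.ncard) ∨
    (TwoConnected (F.induce c.supp) ∧ IsCubic (F.induce c.supp))

/-- `F` is a frame of `G`. -/
def IsFrame {U V : Type*} (F : SimpleGraph U) (G : SimpleGraph V) : Prop :=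
  GoodFrameComponents F ∧
    ∃ H : SimpleGraph V, H ≤ G ∧ IsSubdivisionOf H F ∧ EvenComponents H

/-- A proper 3-edge-coloring of `G`. -/
def ProperEdgeColoring {V : Type*} (G : SimpleGraph V) (f : Sym2 V → Fin 3) : Prop :=
  ∀ u v w : V, G.Adj u v → G.Adj u w → v ≠ w → f s(u, v) ≠ f s(u, w)

/-- The spanning subgraph of edges whose color is different from `c`
(i.e. the union of the other two color classes). -/
def twoClassSub {V : Type*} (G : SimpleGraph V) (f : Sym2 V → Fin 3) (c : Fin 3) :
    SimpleGraph V where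
  Adj u v := G.Adj u v ∧ f s(u, v) ≠ c
  symm := by
    constructor
    rintro u v ⟨h1, h2⟩
    exact ⟨h1.symm, by rwa [Sym2.eq_swap]⟩
  loopless := ⟨fun v h => G.irrefl h.1⟩

/-- A Kotzig graph: a cubic graph with a proper 3-edge-coloring in which any two
color classes form a hamiltonian circuit. -/
def IsKotzig {V : Type*} (G : SimpleGraph V) : Prop :=
  IsCubic G ∧ ∃ f : Sym2 V → Fin 3, ProperEdgeColoring G f ∧
    ∀ c : Fin 3, (twoClassSub G f c).Connected ∧ ∀ v, hdeg (twoClassSub G f c) v = 2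

/-- The family `Fam` is an even subdivision-factor of `G`. -/
def IsEvenSubdivFactor {ι : Type*} (Fam : ι → Σ n : ℕ, SimpleGraph (Fin n))
    {V : Type*} (G : SimpleGraph V) : Prop :=
  ∃ H : SimpleGraph V, H ≤ G ∧ ∀ c : H.ConnectedComponent,
    Even c.supp.ncard ∧ ∃ i, IsSubdivisionOf (H.induce c.supp) (Fam i).2

/-! ### Fin 9 facts -/

lemma pgr_adj_iff (a b : Fin 9) :
    Pgr.Adj a b ↔ (a ≠ b ∧ ((a,b) ∈ pEdges ∨ (b,a) ∈ pEdges)) := Iff.rfl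

instance : DecidableRel Pgr.Adj := fun a b => decidable_of_iff _ (pgr_adj_iff a b).symm

/-- Distance matrix of `Pgr`. -/
def dT : Fin 9 → Fin 9 → ℕ := fun i j =>
  ![![0, 1, 2, 2, 1, 1, 2, 2, 2],
    ![1, 0, 1, 2, 2, 2, 1, 2, 2],
    ![2, 1, 0, 1, 2, 2, 2, 1, 2],
    ![2, 2, 1, 0, 1, 2, 2, 2, 1],
    ![1, 2, 2, 1, 0, 2, 3, 3, 2],
    ![1, 2, 2, 2, 2, 0, 2, 1, 1],
    ![2, 1, 2, 2, 3, 2, 0, 3, 1],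
    ![2, 2, 1, 2, 3, 1, 3, 0, 2],
    ![2, 2, 2, 1, 2, 1, 1, 2, 0]] i j

def inS (i : Fin 9) : Prop := i = 4 ∨ i = 6 ∨ i = 7

instance : DecidablePred inS := fun i => by unfold inS; infer_instance

lemma dT_lip : ∀ i i' j : Fin 9, Pgr.Adj i i' → dT i j ≤ dT i' j + 1 := by decide
lemma dT_self : ∀ i, dT i i = 0 := by decide
lemma dT_le3 : ∀ i j, dT i j ≤ 3 := by decide
lemma dT_S : ∀ a b, inS a → inS b → a ≠ b → dT a b = 3 := by decide

lemma portIdx_inS (n : ℕ) : inS (portIdx n) := by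
  match n with
  | 0 => exact Or.inl rfl
  | 1 => exact Or.inr (Or.inl rfl)
  | (n+2) => exact Or.inr (Or.inr rfl)

lemma portIdx_inj : ∀ n < 3, ∀ m < 3, portIdx n = portIdx m → n = m := by decide

lemma pgr_conn : Pgr.Connected := by
  rw [connected_iff]
  have key : ∀ v : Fin 9, Pgr.Reachable 0 v := by
    intro v
    fin_cases v
    · exact Reachable.refl _
    · exact Walk.reachable (Walk.cons (by decide : Pgr.Adj 0 1) Walk.nil)
    · exact Walk.reachable (Walk.cons (by decide : Pgr.Adj 0 1) (Walk.cons (by decide : Pgr.Adj 1 2) Walk.nil))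
    · exact Walk.reachable (Walk.cons (by decide : Pgr.Adj 0 4) (Walk.cons (by decide : Pgr.Adj 4 3) Walk.nil))
    · exact Walk.reachable (Walk.cons (by decide : Pgr.Adj 0 4) Walk.nil)
    · exact Walk.reachable (Walk.cons (by decide : Pgr.Adj 0 5) Walk.nil)
    · exact Walk.reachable (Walk.cons (by decide : Pgr.Adj 0 1) (Walk.cons (by decide : Pgr.Adj 1 6) Walk.nil))
    · exact Walk.reachable (Walk.cons (by decide : Pgr.Adj 0 5) (Walk.cons (by decide : Pgr.Adj 5 7) Walk.nil))
    · exact Walk.reachable (Walk.cons (by decide : Pgr.Adj 0 5) (Walk.cons (by decide : Pgr.Adj 5 8) Walk.nil))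
  exact ⟨fun u v => (key u).symm.trans (key v), ⟨0⟩⟩

lemma hdeg_pgr : ∀ v, hdeg Pgr v = if inS v then 2 else 3 := by
  intro v
  rw [hdeg, Set.ncard_eq_toFinset_card', Set.toFinset_setOf]
  revert v; decide

def w46 : Pgr.Walk 4 6 := Walk.cons (by decide : Pgr.Adj 4 3) (Walk.cons (by decide : Pgr.Adj 3 8) (Walk.cons (by decide : Pgr.Adj 8 6) Walk.nil))
def w47 : Pgr.Walk 4 7 := Walk.cons (by decide : Pgr.Adj 4 3) (Walk.cons (by decide : Pgr.Adj 3 2) (Walk.cons (by decide : Pgr.Adj 2 7) Walk.nil))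
def w67 : Pgr.Walk 6 7 := Walk.cons (by decide : Pgr.Adj 6 8) (Walk.cons (by decide : Pgr.Adj 8 5) (Walk.cons (by decide : Pgr.Adj 5 7) Walk.nil))

lemma exists_S_walk : ∀ i j : Fin 9, inS i → inS j → ∃ w : Pgr.Walk i j, w.length ≤ 3 := by
  have l46 : w46.length ≤ 3 := by simp [w46]
  have l47 : w47.length ≤ 3 := by simp [w47]
  have l67 : w67.length ≤ 3 := by simp [w67]
  rintro i j (rfl|rfl|rfl) (rfl|rfl|rfl)
  · exact ⟨Walk.nil, by simp⟩
  · exact ⟨w46, l46⟩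
  · exact ⟨w47, l47⟩
  · exact ⟨w46.reverse, by simpa using l46⟩
  · exact ⟨Walk.nil, by simp⟩
  · exact ⟨w67, l67⟩
  · exact ⟨w47.reverse, by simpa using l47⟩
  · exact ⟨w67.reverse, by simpa using l67⟩
  · exact ⟨Walk.nil, by simp⟩

/-! ### Generic rank and port lemmas -/

section Generic
variable {V : Type*} (G : SimpleGraph V) (enc : V → ℕ)

/-- Rank of a neighbor. -/
noncomputable def rk (u v : V) : ℕ := Nat.card {w : V | G.Adj u w ∧ enc w < enc v}

lemma port_eq (u v : V) : port G enc u v = portIdx (rk G enc u v) := rfl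

lemma port_inS (u v : V) : inS (port G enc u v) := portIdx_inS _

variable [Finite V]

lemma rk_lt (u v : V) (h : G.Adj u v) : rk G enc u v < hdeg G u := by
  rw [rk, Nat.card_coe_set_eq, hdeg]
  refine Set.ncard_lt_ncard ?_ (Set.toFinite _)
  constructor
  · rintro w ⟨h1, -⟩; exact h1
  · intro hsub
    exact absurd (hsub h).2 (lt_irrefl _)

lemma rk_lt_rk (u v w : V) (hv : G.Adj u v) (hlt : enc v < enc w) :
    rk G enc u v < rk G enc u w := by
  rw [rk, rk, Nat.card_coe_set_eq, Nat.card_coe_set_eq]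
  refine Set.ncard_lt_ncard ?_ (Set.toFinite _)
  constructor
  · rintro x ⟨h1, h2⟩; exact ⟨h1, h2.trans hlt⟩
  · intro hsub
    exact absurd (hsub ⟨hv, hlt⟩).2 (lt_irrefl _)

lemma rk_inj (hinj : Function.Injective enc) (u v w : V) (hv : G.Adj u v) (hw : G.Adj u w)
    (h : rk G enc u v = rk G enc u w) : v = w := by
  rcases lt_trichotomy (enc v) (enc w) with hlt | heq | hlt
  · exact absurd h (Nat.ne_of_lt (rk_lt_rk G enc u v w hv hlt))
  · exact hinj heq
  · exact absurd h.symm (Nat.ne_of_lt (rk_lt_rk G enc u w v hw hlt))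

lemma rk_surj (hinj : Function.Injective enc) (u : V) (r : ℕ) (hr : r < hdeg G u) :
    ∃ v, G.Adj u v ∧ rk G enc u v = r := by
  classical
  have hcard : Nat.card {w : V | G.Adj u w} = hdeg G u := Nat.card_coe_set_eq _
  let f : {w : V | G.Adj u w} → Fin (hdeg G u) :=
    fun v => ⟨rk G enc u v.1, rk_lt G enc u v.1 v.2⟩
  have hf : Function.Injective f := by
    rintro ⟨a, ha⟩ ⟨b, hb⟩ hab
    exact Subtype.ext (rk_inj G enc hinj u a b ha hb (congrArg Fin.val hab))
  have hbij : Function.Bijective f :=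
    (Nat.bijective_iff_injective_and_card f).2 ⟨hf, by simp; exact hcard⟩
  obtain ⟨⟨v, hv⟩, hfv⟩ := hbij.2 ⟨r, hr⟩
  exact ⟨v, hv, congrArg Fin.val hfv⟩

lemma port_inj (hinj : Function.Injective enc) (u : V) (h3 : hdeg G u ≤ 3)
    (v w : V) (hv : G.Adj u v) (hw : G.Adj u w)
    (h : port G enc u v = port G enc u w) : v = w := by
  rw [port_eq, port_eq] at h
  have h1 : rk G enc u v < 3 := lt_of_lt_of_le (rk_lt G enc u v hv) h3
  have h2 : rk G enc u w < 3 := lt_of_lt_of_le (rk_lt G enc u w hw) h3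
  exact rk_inj G enc hinj u v w hv hw (portIdx_inj _ h1 _ h2 h)

end Generic

/-! ### Inflate: degrees and connectivity -/

section Inflate
variable {V : Type*} (G : SimpleGraph V) (enc : V → ℕ)

/-- Embedding of the copy of `P` at `u` into the inflation. -/
def copyHom (u : V) : Pgr →g inflate G enc :=
  ⟨fun i => (u, i), fun h => Or.inl ⟨rfl, h⟩⟩

lemma inflate_cross {u x : V} (h : G.Adj u x) :
    (inflate G enc).Adj (u, port G enc u x) (x, port G enc x u) :=
  Or.inr ⟨h, rfl, rfl⟩

lemma inflate_reach {u v : V} (h : G.Reachable u v) (i j : Fin 9) :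
    (inflate G enc).Reachable (u, i) (v, j) := by
  have incopy : ∀ (u : V) (i j : Fin 9), (inflate G enc).Reachable (u, i) (u, j) :=
    fun u i j => Reachable.map (copyHom G enc u) (pgr_conn.preconnected i j)
  obtain ⟨w⟩ := h
  induction w generalizing i with
  | nil => exact incopy _ i j
  | @cons a x v ha p ih =>
    exact ((incopy a i (port G enc a x)).trans
      (Walk.reachable (Walk.cons (inflate_cross G enc ha) Walk.nil))).trans
      (ih (port G enc x a))

lemma inflate_connected (hconn : G.Connected) : (inflate G enc).Connected := by
  rw [connected_iff]
  refine ⟨fun a b => ?_, ⟨(hconn.nonempty.some, 0)⟩⟩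
  exact inflate_reach G enc (hconn.preconnected a.1 b.1) a.2 b.2

variable [Finite V]

lemma inflate_nbhd (u : V) (i : Fin 9) :
    {b : V × Fin 9 | (inflate G enc).Adj (u,i) b} =
      ((fun j => (u, j)) '' {j | Pgr.Adj i j}) ∪
      ((fun x => (x, port G enc x u)) '' {x | G.Adj u x ∧ port G enc u x = i}) := by
  ext b
  simp only [Set.mem_setOf_eq, Set.mem_union, Set.mem_image]
  constructor
  · rintro (⟨h1, h2⟩ | ⟨h1, h2, h3'⟩)
    · exact Or.inl ⟨b.2, h2, Prod.ext h1 rfl⟩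
    · exact Or.inr ⟨b.1, ⟨h1, h2.symm⟩, Prod.ext rfl h3'.symm⟩
  · rintro (⟨j, hj, hq⟩ | ⟨x, hx, hq⟩) <;> subst hq
    · exact Or.inl ⟨rfl, hj⟩
    · exact Or.inr ⟨hx.1, hx.2.symm, rfl⟩

lemma inflate_nbhd_disj (u : V) (i : Fin 9) :
    Disjoint ((fun j => (u, j)) '' {j | Pgr.Adj i j})
      ((fun x => (x, port G enc x u)) '' {x | G.Adj u x ∧ port G enc u x = i}) := by
  rw [Set.disjoint_left]
  rintro b ⟨j, hj, hq⟩ ⟨x, hx, hq'⟩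
  subst hq
  have e1 : x = u := congrArg Prod.fst hq'
  exact (G.ne_of_adj hx.1) e1.symm

lemma inflate_hdeg_port (hinj : Function.Injective enc) (u : V) (i : Fin 9)
    (h3 : hdeg G u ≤ 3) (hex : ∃ x, G.Adj u x ∧ port G enc u x = i) :
    hdeg (inflate G enc) (u, i) = hdeg Pgr i + 1 := by
  rw [hdeg, inflate_nbhd,
    Set.ncard_union_eq (inflate_nbhd_disj G enc u i) (Set.toFinite _) (Set.toFinite _)]
  congr 1
  · rw [Set.ncard_image_of_injective _ (fun a b h => (Prod.ext_iff.1 h).2), hdeg]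
  · obtain ⟨x0, hx0⟩ := hex
    have hsingle : {x | G.Adj u x ∧ port G enc u x = i} = {x0} := by
      ext y
      constructor
      · rintro ⟨hy1, hy2⟩
        exact port_inj G enc hinj u h3 y x0 hy1 hx0.1 (hy2.trans hx0.2.symm)
      · rintro rfl; exact hx0
    rw [hsingle, Set.image_singleton, Set.ncard_singleton]

lemma inflate_hdeg_notport (u : V) (i : Fin 9)
    (hex : ¬ ∃ x, G.Adj u x ∧ port G enc u x = i) :
    hdeg (inflate G enc) (u, i) = hdeg Pgr i := by
  rw [hdeg, inflate_nbhd,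
    Set.ncard_union_eq (inflate_nbhd_disj G enc u i) (Set.toFinite _) (Set.toFinite _)]
  have hempty : {x | G.Adj u x ∧ port G enc u x = i} = ∅ := by
    ext y; simp only [Set.mem_setOf_eq, Set.mem_empty_iff_false, iff_false]
    exact fun hy => hex ⟨y, hy⟩
  rw [hempty, Set.image_empty, Set.ncard_empty, Nat.add_zero,
    Set.ncard_image_of_injective _ (fun a b h => (Prod.ext_iff.1 h).2), hdeg]

end Inflate

/-! ### Lipschitz functions and distance lower bounds -/

lemma lip_walk {W : Type*} (H : SimpleGraph W) (f : W → ℕ)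
    (hf : ∀ a b, H.Adj a b → f a ≤ f b + 1) {a b : W} (w : H.Walk a b) :
    f a ≤ f b + w.length := by
  induction w with
  | nil => simp
  | cons ha p ih =>
    have := hf _ _ ha
    simp only [Walk.length_cons]
    omega

lemma lip_dist {W : Type*} (H : SimpleGraph W) (f : W → ℕ)
    (hf : ∀ a b, H.Adj a b → f a ≤ f b + 1) {a b : W} (hr : H.Reachable a b) :
    f a ≤ f b + H.dist a b := by
  obtain ⟨w, hw⟩ := hr.exists_walk_length_eq_dist
  simpa [hw] using lip_walk H f hf w

section Lower
variable {V : Type*} (G : SimpleGraph V) (enc : V → ℕ)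

lemma exists_desc (hconn : G.Connected) (u v : V) (h : u ≠ v) :
    ∃ x, G.Adj u x ∧ G.dist x v + 1 = G.dist u v := by
  obtain ⟨w, hw⟩ := (hconn u v).exists_walk_length_eq_dist
  cases w with
  | nil => exact absurd rfl h
  | @cons _ x _ ha p =>
    refine ⟨x, ha, ?_⟩
    have h1 : G.dist x v ≤ p.length := dist_le p
    have h2 : G.dist u v ≤ G.dist u x + G.dist x v := hconn.dist_triangle
    have h3 : G.dist u x = 1 := dist_eq_one_iff_adj.2 ha
    simp only [Walk.length_cons] at hw
    omega

/-- Neighbors strictly closer to `w2`. -/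
def descSet (w2 u : V) : Set V := {x | G.Adj u x ∧ G.dist x w2 + 1 = G.dist u w2}

noncomputable def gfun (w2 u : V) (i : Fin 9) : ℕ :=
  sInf ((fun x => dT i (port G enc u x)) '' descSet G w2 u)

open Classical in
noncomputable def hfun (w2 : V) (p : V × Fin 9) : ℕ :=
  if p.1 = w2 then dT p.2 7 else 4 * G.dist p.1 w2 + gfun G enc w2 p.1 p.2

lemma gfun_le {w2 u : V} {x : V} (hx : x ∈ descSet G w2 u) (i : Fin 9) :
    gfun G enc w2 u i ≤ dT i (port G enc u x) :=
  Nat.sInf_le ⟨x, hx, rfl⟩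

lemma gfun_exists (hconn : G.Connected) {w2 u : V} (h : u ≠ w2) (i : Fin 9) :
    ∃ x ∈ descSet G w2 u, gfun G enc w2 u i = dT i (port G enc u x) := by
  have hds : (descSet G w2 u).Nonempty := exists_desc G hconn u w2 h
  have hne : ((fun x => dT i (port G enc u x)) '' descSet G w2 u).Nonempty :=
    hds.image _
  obtain ⟨x, hx, heq⟩ := Nat.sInf_mem hne
  exact ⟨x, hx, heq.symm⟩

lemma gfun_le3 (hconn : G.Connected) {w2 u : V} (h : u ≠ w2) (i : Fin 9) :
    gfun G enc w2 u i ≤ 3 := by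
  obtain ⟨x, hx, heq⟩ := gfun_exists G enc hconn h i
  exact heq.le.trans (dT_le3 _ _)

lemma gfun_eq3 (hconn : G.Connected) {w2 u : V} (h : u ≠ w2) {i : Fin 9} (hi : inS i)
    (hall : ∀ x ∈ descSet G w2 u, port G enc u x ≠ i) :
    gfun G enc w2 u i = 3 := by
  obtain ⟨x, hx, heq⟩ := gfun_exists G enc hconn h i
  rw [heq]
  exact dT_S i _ hi (port_inS G enc u x) (fun e => hall x hx e.symm)

end Lower

section Lower2
variable {V : Type*} (G : SimpleGraph V) (enc : V → ℕ) [Finite V]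

lemma copy_dist_le (u : V) (i j : Fin 9) (hi : inS i) (hj : inS j) :
    (inflate G enc).dist (u, i) (u, j) ≤ 3 := by
  obtain ⟨w, hw⟩ := exists_S_walk i j hi hj
  have h1 := dist_le (show (inflate G enc).Walk (u,i) (u,j) from w.map (copyHom G enc u))
  simp only [Walk.length_map] at h1
  have h2 : (w.map (copyHom G enc u)).length = w.length := Walk.length_map _ _
  exact h1.trans (h2.le.trans hw)

lemma hfun_lip (hinj : Function.Injective enc) (hconn : G.Connected)
    (h3 : ∀ v, hdeg G v ≤ 3) (w2 : V)
    (hw2 : ∀ x, G.Adj w2 x → port G enc w2 x ≠ 7) :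
    ∀ a b, (inflate G enc).Adj a b → hfun G enc w2 a ≤ hfun G enc w2 b + 1 := by
  have tri : ∀ a b c : V, G.dist a c ≤ G.dist a b + G.dist b c :=
    fun a b c => hconn.dist_triangle
  rintro ⟨u, i⟩ ⟨x, i'⟩ (⟨h1, h2⟩ | ⟨h1, h2, h3'⟩)
  · -- in-copy edge
    simp only at h1 h2
    subst h1
    by_cases hu : u = w2
    · subst hu
      have e1 : hfun G enc u (u, i) = dT i 7 := by
        simp only [hfun]; rw [if_true]
      have e2 : hfun G enc u (u, i') = dT i' 7 := by
        simp only [hfun]; rw [if_true]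
      have := dT_lip i i' 7 h2
      omega
    · have e1 : hfun G enc w2 (u, i) = 4 * G.dist u w2 + gfun G enc w2 u i := by
        simp only [hfun]; rw [if_neg hu]
      have e2 : hfun G enc w2 (u, i') = 4 * G.dist u w2 + gfun G enc w2 u i' := by
        simp only [hfun]; rw [if_neg hu]
      have hglip : gfun G enc w2 u i ≤ gfun G enc w2 u i' + 1 := by
        obtain ⟨y, hy, heq⟩ := gfun_exists G enc hconn hu i'
        have hh1 := gfun_le G enc hy i
        have hh2 := dT_lip i i' (port G enc u y) h2
        omega
      omega
  · -- cross edge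
    simp only at h1 h2 h3'
    subst h2; subst h3'
    by_cases hu : u = w2
    · subst hu
      have hxw : x ≠ u := fun e => G.ne_of_adj h1 e.symm
      have hdx : 1 ≤ G.dist x u := hconn.pos_dist_of_ne hxw
      have e1 : hfun G enc u (u, port G enc u x) = dT (port G enc u x) 7 := by
        simp only [hfun]; rw [if_true]
      have e2 : hfun G enc u (x, port G enc x u) =
          4 * G.dist x u + gfun G enc u x (port G enc x u) := by
        simp only [hfun]; rw [if_neg hxw]
      have := dT_le3 (port G enc u x) 7
      omega
    · by_cases hx' : x = w2
      · subst hx'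
        have hdu : G.dist u x = 1 := dist_eq_one_iff_adj.2 h1
        have hmem : x ∈ descSet G x u := ⟨h1, by rw [SimpleGraph.dist_self]; omega⟩
        have hg0 : gfun G enc x u (port G enc u x) = 0 :=
          Nat.le_zero.1 ((gfun_le G enc hmem _).trans (by rw [dT_self]))
        have hq3 : dT (port G enc x u) 7 = 3 :=
          dT_S _ _ (port_inS G enc x u) (Or.inr (Or.inr rfl)) (hw2 u h1.symm)
        have e1 : hfun G enc x (u, port G enc u x) =
            4 * G.dist u x + gfun G enc x u (port G enc u x) := by
          simp only [hfun]; rw [if_neg hu]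
        have e2 : hfun G enc x (x, port G enc x u) = dT (port G enc x u) 7 := by
          simp only [hfun]; rw [if_true]
        omega
      · have hdux : G.dist u x = 1 := dist_eq_one_iff_adj.2 h1
        have hdxu : G.dist x u = 1 := dist_eq_one_iff_adj.2 h1.symm
        have ht1 : G.dist u w2 ≤ G.dist x w2 + 1 := by
          have := tri u x w2; omega
        have ht2 : G.dist x w2 ≤ G.dist u w2 + 1 := by
          have := tri x u w2; omega
        have e1 : hfun G enc w2 (u, port G enc u x) =
            4 * G.dist u w2 + gfun G enc w2 u (port G enc u x) := by
          simp only [hfun]; rw [if_neg hu]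
        have e2 : hfun G enc w2 (x, port G enc x u) =
            4 * G.dist x w2 + gfun G enc w2 x (port G enc x u) := by
          simp only [hfun]; rw [if_neg hx']
        have hgq3 : G.dist x w2 ≤ G.dist u w2 →
            gfun G enc w2 x (port G enc x u) = 3 := by
          intro hle
          refine gfun_eq3 G enc hconn hx' (port_inS G enc x u) (fun y hy he => ?_)
          have hyu : y = u := port_inj G enc hinj x (h3 x) y u hy.1 h1.symm he
          subst hyu
          have := hy.2
          omega
        rcases Nat.lt_trichotomy (G.dist x w2) (G.dist u w2) with hc | hc | hc
        · have hdesc : x ∈ descSet G w2 u := ⟨h1, by omega⟩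
          have hg0 : gfun G enc w2 u (port G enc u x) = 0 :=
            Nat.le_zero.1 ((gfun_le G enc hdesc _).trans (by rw [dT_self]))
          have h33 : gfun G enc w2 x (port G enc x u) = 3 := hgq3 (by omega)
          omega
        · have h33 : gfun G enc w2 x (port G enc x u) = 3 := hgq3 (by omega)
          have hgle : gfun G enc w2 u (port G enc u x) ≤ 3 := gfun_le3 G enc hconn hu _
          omega
        · have hmem : u ∈ descSet G w2 x := ⟨h1.symm, by omega⟩
          have hg0 : gfun G enc w2 x (port G enc x u) = 0 :=
            Nat.le_zero.1 ((gfun_le G enc hmem _).trans (by rw [dT_self]))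
          have hgle : gfun G enc w2 u (port G enc u x) ≤ 3 := gfun_le3 G enc hconn hu _
          omega

lemma inflate_dist_ge (hinj : Function.Injective enc) (hconn : G.Connected)
    (h3 : ∀ v, hdeg G v ≤ 3) (w1 w2 : V) (hne : w1 ≠ w2)
    (hw1 : ∀ x, G.Adj w1 x → port G enc w1 x ≠ 7)
    (hw2 : ∀ x, G.Adj w2 x → port G enc w2 x ≠ 7) :
    4 * G.dist w1 w2 + 3 ≤ (inflate G enc).dist (w1, 7) (w2, 7) := by
  have hlip := hfun_lip G enc hinj hconn h3 w2 hw2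
  have hreach : (inflate G enc).Reachable (w1, 7) (w2, 7) :=
    inflate_reach G enc (hconn.preconnected w1 w2) 7 7
  have key := lip_dist _ _ hlip hreach
  have hg3 : gfun G enc w2 w1 7 = 3 :=
    gfun_eq3 G enc hconn hne (Or.inr (Or.inr rfl)) (fun x hx => hw1 x hx.1)
  have h1 : hfun G enc w2 (w1, 7) = 4 * G.dist w1 w2 + gfun G enc w2 w1 7 := by
    simp only [hfun]; rw [if_neg hne]
  have h2 : hfun G enc w2 (w2, 7) = dT 7 7 := by
    simp only [hfun]; rw [if_true]
  have h0 : dT (7 : Fin 9) 7 = 0 := dT_self 7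
  omega

lemma inflate_dist_le (hconn : G.Connected) :
    ∀ (n : ℕ) (u v : V), G.dist u v = n → ∀ i j, inS i → inS j →
      (inflate G enc).dist (u, i) (v, j) ≤ 4 * n + 3 := by
  have iconn := inflate_connected G enc hconn
  have tri : ∀ a b c : V × Fin 9,
      (inflate G enc).dist a c ≤ (inflate G enc).dist a b + (inflate G enc).dist b c :=
    fun a b c => iconn.dist_triangle
  intro n
  induction n with
  | zero =>
    intro u v hd i j hi hj
    have huv : u = v := hconn.dist_eq_zero_iff.1 hd
    subst huv
    have := copy_dist_le G enc u i j hi hj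
    omega
  | succ n ih =>
    intro u v hd i j hi hj
    have hne : u ≠ v := by
      intro e; subst e; rw [SimpleGraph.dist_self] at hd; omega
    obtain ⟨x, hx, hdx⟩ := exists_desc G hconn u v hne
    have hdist_x : G.dist x v = n := by omega
    have step1 : (inflate G enc).dist (u, i) (u, port G enc u x) ≤ 3 :=
      copy_dist_le G enc u i _ hi (port_inS G enc u x)
    have step2 : (inflate G enc).dist (u, port G enc u x) (x, port G enc x u) ≤ 1 := by
      have := dist_le (Walk.cons (inflate_cross G enc hx) Walk.nil)
      simpa using this
    have step3 := ih x v hdist_x (port G enc x u) j (port_inS G enc x u) hj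
    have t1 := tri (u, i) (u, port G enc u x) (v, j)
    have t2 := tri (u, port G enc u x) (x, port G enc x u) (v, j)
    omega

end Lower2

/-! ### More port lemmas -/

section Ports
variable {V : Type*} (G : SimpleGraph V) (enc : V → ℕ) [Finite V]

lemma port_ne7_of_deg2 (u : V) (h : hdeg G u = 2) (x : V) (hx : G.Adj u x) :
    port G enc u x ≠ 7 := by
  have hlt := rk_lt G enc u x hx
  rw [h] at hlt
  have h01 : rk G enc u x = 0 ∨ rk G enc u x = 1 := by omega
  rcases h01 with e | e <;> rw [port_eq, e] <;> decide

lemma exists_port_deg3 (hinj : Function.Injective enc) (u : V) (h : hdeg G u = 3)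
    {i : Fin 9} (hi : inS i) : ∃ x, G.Adj u x ∧ port G enc u x = i := by
  rcases hi with rfl | rfl | rfl
  · obtain ⟨x, hx, he⟩ := rk_surj G enc hinj u 0 (by omega)
    exact ⟨x, hx, by rw [port_eq, he]; rfl⟩
  · obtain ⟨x, hx, he⟩ := rk_surj G enc hinj u 1 (by omega)
    exact ⟨x, hx, by rw [port_eq, he]; rfl⟩
  · obtain ⟨x, hx, he⟩ := rk_surj G enc hinj u 2 (by omega)
    exact ⟨x, hx, by rw [port_eq, he]; rfl⟩

lemma exists_port_deg2 (hinj : Function.Injective enc) (u : V) (h : hdeg G u = 2)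
    {i : Fin 9} (hi : i = 4 ∨ i = 6) : ∃ x, G.Adj u x ∧ port G enc u x = i := by
  rcases hi with rfl | rfl
  · obtain ⟨x, hx, he⟩ := rk_surj G enc hinj u 0 (by omega)
    exact ⟨x, hx, by rw [port_eq, he]; rfl⟩
  · obtain ⟨x, hx, he⟩ := rk_surj G enc hinj u 1 (by omega)
    exact ⟨x, hx, by rw [port_eq, he]; rfl⟩

end Ports

/-! ### Distances between the 2-valent vertices of `Pgr` -/

lemma pgr_dist_S : ∀ a b : Fin 9, inS a → inS b → a ≠ b → Pgr.dist a b = 3 := by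
  intro a b ha hb hab
  have hub : Pgr.dist a b ≤ 3 := by
    obtain ⟨w, hw⟩ := exists_S_walk a b ha hb
    exact (dist_le w).trans hw
  have hlb : dT a b ≤ dT b b + Pgr.dist a b :=
    lip_dist Pgr (fun v => dT v b) (fun u v huv => dT_lip u v b huv)
      (pgr_conn.preconnected a b)
  have h3 : dT a b = 3 := dT_S a b ha hb hab
  have h0 : dT b b = 0 := dT_self b
  omega

/-! ### The three 2-valent vertices of `Pᵏ` and the invariant -/

def tvP : Fin 3 → Fin 9 := ![4, 6, 7]

def tv : (k : ℕ) → Fin 3 → (ItP k).V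
  | 0 => tvP
  | k + 1 => fun a => (tv k a, 7)

lemma tvP_inS : ∀ a, inS (tvP a) := by decide

lemma tvP_ne : ∀ a b : Fin 3, a ≠ b → tvP a ≠ tvP b := by decide

structure GoodK (k : ℕ) : Prop where
  fin : Finite (ItP k).V
  inj : Function.Injective (ItP k).enc
  conn : (ItP k).G.Connected
  degtv : ∀ a, hdeg (ItP k).G (tv k a) = 2
  deg3 : ∀ v, (∀ a, v ≠ tv k a) → hdeg (ItP k).G v = 3
  tvne : ∀ a b : Fin 3, a ≠ b → tv k a ≠ tv k b
  dtv : ∀ a b : Fin 3, a ≠ b → (ItP k).G.dist (tv k a) (tv k b) + 1 = 4 ^ (k + 1)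

lemma GoodK.le3 {k : ℕ} (g : GoodK k) : ∀ v, hdeg (ItP k).G v ≤ 3 := by
  intro v
  by_cases h : ∃ a, v = tv k a
  · obtain ⟨a, rfl⟩ := h
    rw [g.degtv a]; omega
  · push_neg at h
    rw [g.deg3 v h]

lemma goodK_zero : GoodK 0 := by
  refine ⟨inferInstanceAs (Finite (Fin 9)), Fin.val_injective, pgr_conn, ?_, ?_, tvP_ne, ?_⟩
  · intro a
    show hdeg Pgr (tvP a) = 2
    rw [hdeg_pgr, if_pos (tvP_inS a)]
  · intro v hv
    show hdeg Pgr v = 3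
    refine (hdeg_pgr v).trans (if_neg ?_)
    rintro (rfl | rfl | rfl)
    · exact hv 0 rfl
    · exact hv 1 rfl
    · exact hv 2 rfl
  · intro a b hab
    show Pgr.dist (tvP a) (tvP b) + 1 = 4
    rw [pgr_dist_S _ _ (tvP_inS a) (tvP_inS b) (tvP_ne a b hab)]

lemma goodK_succ {k : ℕ} (g : GoodK k) : GoodK (k + 1) := by
  haveI := g.fin
  set A := ItP k with hA
  have h3 := g.le3
  refine ⟨?_, ?_, ?_, ?_, ?_, ?_, ?_⟩
  · exact inferInstanceAs (Finite (A.V × Fin 9))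
  · rintro p q h
    have := Nat.pair_eq_pair.1 h
    exact Prod.ext (g.inj this.1) (Fin.val_injective this.2)
  · exact inflate_connected A.G A.enc g.conn
  · intro a
    show hdeg (inflate A.G A.enc) (tv k a, 7) = 2
    rw [inflate_hdeg_notport A.G A.enc (tv k a) 7 ?_]
    · rw [hdeg_pgr]; rfl
    · rintro ⟨x, hx, he⟩
      exact port_ne7_of_deg2 A.G A.enc (tv k a) (g.degtv a) x hx he
  · rintro ⟨u, i⟩ hv
    show hdeg (inflate A.G A.enc) (u, i) = 3
    by_cases hiS : inS i
    · have hex : ∃ x, A.G.Adj u x ∧ port A.G A.enc u x = i := by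
        by_cases hu : ∃ a, u = tv k a
        · obtain ⟨a, rfl⟩ := hu
          have hi7 : i ≠ 7 := by
            rintro rfl
            exact hv a rfl
          have hi46 : i = 4 ∨ i = 6 := by
            rcases hiS with rfl | rfl | rfl
            · exact Or.inl rfl
            · exact Or.inr rfl
            · exact absurd rfl hi7
          exact exists_port_deg2 A.G A.enc g.inj _ (g.degtv a) hi46
        · push_neg at hu
          exact exists_port_deg3 A.G A.enc g.inj u (g.deg3 u hu) hiS
      rw [inflate_hdeg_port A.G A.enc g.inj u i (h3 u) hex, hdeg_pgr, if_pos hiS]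
    · have hex : ¬ ∃ x, A.G.Adj u x ∧ port A.G A.enc u x = i := by
        rintro ⟨x, hx, he⟩
        exact hiS (he ▸ port_inS A.G A.enc u x)
      rw [inflate_hdeg_notport A.G A.enc u i hex, hdeg_pgr, if_neg hiS]
  · intro a b hab e
    exact g.tvne a b hab (congrArg Prod.fst e)
  · intro a b hab
    have hd := g.dtv a b hab
    have hne := g.tvne a b hab
    have hw1 : ∀ x, A.G.Adj (tv k a) x → port A.G A.enc (tv k a) x ≠ 7 :=
      fun x hx => port_ne7_of_deg2 A.G A.enc _ (g.degtv a) x hx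
    have hw2 : ∀ x, A.G.Adj (tv k b) x → port A.G A.enc (tv k b) x ≠ 7 :=
      fun x hx => port_ne7_of_deg2 A.G A.enc _ (g.degtv b) x hx
    have hlb := inflate_dist_ge A.G A.enc g.inj g.conn h3 (tv k a) (tv k b) hne hw1 hw2
    have hub := inflate_dist_le A.G A.enc g.conn (A.G.dist (tv k a) (tv k b))
      (tv k a) (tv k b) rfl 7 7 (Or.inr (Or.inr rfl)) (Or.inr (Or.inr rfl))
    show (inflate A.G A.enc).dist (tv k a, 7) (tv k b, 7) + 1 = 4 ^ (k + 1 + 1)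
    have hD : (inflate A.G A.enc).dist (tv k a, 7) (tv k b, 7) =
        4 * A.G.dist (tv k a) (tv k b) + 3 := le_antisymm hub hlb
    have hpow : (4:ℕ) ^ (k + 1 + 1) = 4 * 4 ^ (k + 1) := by ring
    rw [hD, hpow, ← hd]
    ring

lemma goodK : ∀ k, GoodK k := by
  intro k
  induction k with
  | zero => exact goodK_zero
  | succ k ih => exact goodK_succ ih

theorem stmt_6' (k : ℕ) :
    sInf { n : ℕ | ∃ w1 w2 : (ItP k).V,
      hdeg (ItP k).G w1 = 2 ∧ hdeg (ItP k).G w2 = 2 ∧ w1 ≠ w2 ∧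
      n = (ItP k).G.dist w1 w2 + 1 } = 4 ^ (k + 1) := by
  have g := goodK k
  have hmem : 4 ^ (k + 1) ∈ { n : ℕ | ∃ w1 w2 : (ItP k).V,
      hdeg (ItP k).G w1 = 2 ∧ hdeg (ItP k).G w2 = 2 ∧ w1 ≠ w2 ∧
      n = (ItP k).G.dist w1 w2 + 1 } :=
    ⟨tv k 0, tv k 1, g.degtv 0, g.degtv 1, g.tvne 0 1 (by decide),
      (g.dtv 0 1 (by decide)).symm⟩
  have hall : ∀ n ∈ { n : ℕ | ∃ w1 w2 : (ItP k).V,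
      hdeg (ItP k).G w1 = 2 ∧ hdeg (ItP k).G w2 = 2 ∧ w1 ≠ w2 ∧
      n = (ItP k).G.dist w1 w2 + 1 }, n = 4 ^ (k + 1) := by
    rintro n ⟨w1, w2, hd1, hd2, hne, rfl⟩
    have h1 : ∃ a, w1 = tv k a := by
      by_contra h; push_neg at h
      have := g.deg3 w1 h
      omega
    have h2 : ∃ a, w2 = tv k a := by
      by_contra h; push_neg at h
      have := g.deg3 w2 h
      omega
    obtain ⟨a, rfl⟩ := h1
    obtain ⟨b, rfl⟩ := h2
    have hab : a ≠ b := fun e => hne (by rw [e])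
    exact g.dtv a b hab
  exact hall _ (Nat.sInf_mem ⟨_, hmem⟩)

/-- the minimum number of vertices of a path in `Pᵏ` connecting two
distinct 2-valent vertices equals `4^{k+1}`. -/
theorem stmt_6 (k : ℕ) :
    sInf { n : ℕ | ∃ w1 w2 : (ItP k).V,
      hdeg (ItP k).G w1 = 2 ∧ hdeg (ItP k).G w2 = 2 ∧ w1 ≠ w2 ∧
      n = (ItP k).G.dist w1 w2 + 1 } = 4 ^ (k + 1) := by
  exact stmt_6' k
end

section
/- Let G be a cubic graph with a minimal 3-edge cut E_0, and let M be an f-matching of G. Then |M ∩ E_0| ∈ {0, 1}. -/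
open SimpleGraph

lemma sym2_rep {V : Type} (e : Sym2 V) : ∃ x y, e = s(x,y) := by
  induction e using Sym2.inductionOn with
  | hf x y => exact ⟨x, y, rfl⟩


lemma walk_split {V : Type} (G : SimpleGraph V) (s : Set (Sym2 V)) (x y : V)
    {a b : V} (h : (G.deleteEdges (s \ {s(x,y)})).Reachable a b) :
    (G.deleteEdges s).Reachable a b ∨
    ((G.deleteEdges s).Reachable a x ∧ (G.deleteEdges s).Reachable y b) ∨
    ((G.deleteEdges s).Reachable a y ∧ (G.deleteEdges s).Reachable x b) := by
  obtain ⟨w⟩ := h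
  induction w with
  | nil => exact Or.inl (Reachable.refl _)
  | cons hadj p ih =>
    rename_i u c d
    rw [deleteEdges_adj] at hadj
    obtain ⟨hG, hne⟩ := hadj
    by_cases hmem : s(u, c) ∈ s
    · have heq : s(u, c) = s(x, y) := by
        by_contra hne'
        exact hne ⟨hmem, hne'⟩
      rw [Sym2.eq_iff] at heq
      rcases heq with ⟨rfl, rfl⟩ | ⟨rfl, rfl⟩
      · rcases ih with h1 | ⟨h1, h2⟩ | ⟨h1, h2⟩
        · exact Or.inr (Or.inl ⟨Reachable.refl _, h1⟩)
        · exact Or.inl (h1.symm.trans h2)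
        · exact Or.inl h2
      · rcases ih with h1 | ⟨h1, h2⟩ | ⟨h1, h2⟩
        · exact Or.inr (Or.inr ⟨Reachable.refl _, h1⟩)
        · exact Or.inl h2
        · exact Or.inl (h1.symm.trans h2)
    · have hadj' : (G.deleteEdges s).Adj u c := by
        rw [deleteEdges_adj]; exact ⟨hG, hmem⟩
      rcases ih with h1 | ⟨h1, h2⟩ | ⟨h1, h2⟩
      · exact Or.inl (hadj'.reachable.trans h1)
      · exact Or.inr (Or.inl ⟨hadj'.reachable.trans h1, h2⟩)
      · exact Or.inr (Or.inr ⟨hadj'.reachable.trans h1, h2⟩)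


lemma odd_side {V : Type} [Fintype V] (G : SimpleGraph V) (hG : IsCubic G)
    (E0 : Set (Sym2 V)) (hsub : E0 ⊆ G.edgeSet) (hcard : E0.ncard = 3)
    (A : Set V)
    (hcross : ∀ x y : V, G.Adj x y → ((x ∈ A ↔ y ∉ A) ↔ s(x,y) ∈ E0)) :
    Odd A.ncard := by
  classical
  have hdeg_eq : ∀ v, G.degree v = 3 := by
    intro v
    have h := hG v
    rw [hdeg, Set.ncard_eq_toFinset_card'] at h
    rw [← h, ← card_neighborFinset_eq_degree]
    congr 1
  set Af := A.toFinset with hAf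
  -- step 1: sum of degrees over Af
  have h1 : ∑ v ∈ Af, G.degree v = 3 * Af.card := by
    simp [hdeg_eq, Finset.sum_const, mul_comm]
  -- step 2: degree as sum over edges
  have h2 : ∀ v, G.degree v = ∑ e ∈ G.edgeFinset, (if v ∈ e then 1 else 0) := by
    intro v
    rw [← card_incidenceFinset_eq_degree, incidenceFinset_eq_filter, Finset.card_filter]
  have h3 : (3 * Af.card : ℕ) = ∑ e ∈ G.edgeFinset, ∑ v ∈ Af, (if v ∈ e then 1 else 0) := by
    rw [← h1, Finset.sum_comm]
    exact Finset.sum_congr rfl fun v _ => h2 v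
  -- now pass to ZMod 2
  have h4 : ∀ e ∈ G.edgeFinset,
      ((∑ v ∈ Af, (if v ∈ e then 1 else 0) : ℕ) : ZMod 2) = (if e ∈ E0 then 1 else 0) := by
    intro e
    induction e using Sym2.inductionOn with
    | hf x y =>
      intro he
      rw [mem_edgeFinset, mem_edgeSet] at he
      have hne : x ≠ y := he.ne
      have hsplit : ∀ v ∈ Af, (if v ∈ s(x,y) then 1 else 0) =
          ((if v = x then 1 else 0) + (if v = y then 1 else 0) : ℕ) := by
        intro v _
        simp only [Sym2.mem_iff]
        by_cases hvx : v = x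
        · subst hvx; simp [hne]
        · by_cases hvy : v = y <;> simp [hvx, hvy, Ne.symm hne]
      rw [Finset.sum_congr rfl hsplit, Finset.sum_add_distrib,
        Finset.sum_ite_eq' Af x (fun _ => 1), Finset.sum_ite_eq' Af y (fun _ => 1)]
      have hmemA : ∀ v, v ∈ Af ↔ v ∈ A := fun v => Set.mem_toFinset
      by_cases hx : x ∈ A <;> by_cases hy : y ∈ A
      · have : s(x,y) ∉ E0 := by
          rw [← hcross x y he]; simp [hx, hy]
        simp only [hmemA, if_pos hx, if_pos hy, if_neg this]
        rw [Nat.cast_add, Nat.cast_one]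
        decide
      · have : s(x,y) ∈ E0 := by rw [← hcross x y he]; simp [hx, hy]
        simp [hmemA, hx, hy, this]
      · have : s(x,y) ∈ E0 := by rw [← hcross x y he]; simp [hx, hy]
        simp [hmemA, hx, hy, this]
      · have : s(x,y) ∉ E0 := by
          rw [← hcross x y he]; simp [hx, hy]
        simp [hmemA, hx, hy, this]
  have h5 : ((3 * Af.card : ℕ) : ZMod 2) = 1 := by
    rw [h3, Nat.cast_sum, Finset.sum_congr rfl h4]
    have hfe : G.edgeFinset.filter (· ∈ E0) = E0.toFinset := by
      ext e
      simp only [Finset.mem_filter, Set.mem_toFinset, mem_edgeFinset]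
      exact ⟨fun h => h.2, fun h => ⟨hsub h, h⟩⟩
    have : ∑ e ∈ G.edgeFinset, (if e ∈ E0 then (1 : ZMod 2) else 0)
        = ((G.edgeFinset.filter (· ∈ E0)).card : ZMod 2) := by
      rw [Finset.card_filter]
      push_cast
      rfl
    rw [this, hfe]
    have : E0.toFinset.card = 3 := by rw [← Set.ncard_eq_toFinset_card']; exact hcard
    rw [this]; decide
  have h6 : ((Af.card : ℕ) : ZMod 2) = 1 := by
    rw [Nat.cast_mul] at h5
    have h30 : ((3 : ℕ) : ZMod 2) = 1 := by decide
    rw [h30, one_mul] at h5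
    exact h5
  rw [Set.ncard_eq_toFinset_card']
  exact (ZMod.natCast_eq_one_iff_odd).mp h6

/-- if `E₀` is a minimal 3-edge cut of a cubic graph `G` and `M` is an
`f`-matching of `G`, then `|M ∩ E₀| ∈ {0, 1}`. -/
theorem stmt_9 {V : Type} [Fintype V] (G : SimpleGraph V) (hG : IsCubic G)
    (E0 : Set (Sym2 V)) (hE : IsMinEdgeCut G E0) (hcard : E0.ncard = 3)
    (M : Set (Sym2 V)) (hM : IsFMatching G M) :
    (M ∩ E0).ncard = 0 ∨ (M ∩ E0).ncard = 1 := by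
  classical
  obtain ⟨hE0sub, hdisc, hmin⟩ := hE
  have hE0fin : E0.Finite := Set.toFinite _
  have hMEfin : (M ∩ E0).Finite := Set.toFinite _
  have hle3 : (M ∩ E0).ncard ≤ 3 :=
    hcard ▸ Set.ncard_le_ncard Set.inter_subset_right hE0fin
  have hE0ne : E0.Nonempty := by
    rw [Set.nonempty_iff_ne_empty]
    intro h
    rw [h, Set.ncard_empty] at hcard
    omega
  have hconn : ∀ e ∈ E0, (G.deleteEdges (E0 \ {e})).Connected := fun e he =>
    hmin _ (Set.sdiff_singleton_ssubset.mpr he)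
  obtain ⟨e0, he0⟩ := hE0ne
  have hneV : Nonempty V := (hconn e0 he0).nonempty
  have k1 : ∀ x y : V, s(x,y) ∈ E0 → ¬(G.deleteEdges E0).Reachable x y := by
    intro x y he hreach
    apply hdisc
    rw [connected_iff]
    refine ⟨fun a b => ?_, hneV⟩
    have h := (hconn _ he).preconnected a b
    rcases walk_split G E0 x y h with h1 | ⟨h1, h2⟩ | ⟨h1, h2⟩
    · exact h1
    · exact (h1.trans hreach).trans h2
    · exact (h1.trans hreach.symm).trans h2
  obtain ⟨x0, y0, hx0y0⟩ := sym2_rep e0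
  rw [hx0y0] at he0
  set A := {v | (G.deleteEdges E0).Reachable v x0} with hAdef
  have k2 : ∀ v, v ∈ A ∨ (G.deleteEdges E0).Reachable v y0 := by
    intro v
    have h := (hconn e0 (hx0y0 ▸ he0)).preconnected v x0
    rw [hx0y0] at h
    rcases walk_split G E0 x0 y0 h with h1 | ⟨h1, h2⟩ | ⟨h1, h2⟩
    · exact Or.inl h1
    · exact Or.inl h1
    · exact Or.inr h1
  have hcrossA : ∀ x y, G.Adj x y → ((x ∈ A ↔ y ∉ A) ↔ s(x,y) ∈ E0) := by
    intro x y hadj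
    constructor
    · intro hxy
      by_contra hnot
      have hadj' : (G.deleteEdges E0).Adj x y := by
        rw [deleteEdges_adj]; exact ⟨hadj, hnot⟩
      by_cases hx : x ∈ A
      · exact (hxy.mp hx) (hadj'.symm.reachable.trans hx)
      · have hy : y ∈ A := by
          by_contra hy
          exact hx (hxy.mpr hy)
        exact hx (hadj'.reachable.trans hy)
    · intro he
      constructor
      · intro hx hy
        exact k1 x y he (Reachable.trans hx (Reachable.symm hy))
      · intro hy
        rcases k2 x with hx | hx
        · exact hx
        · rcases k2 y with hy' | hy'
          · exact absurd hy' hy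
          · exact absurd (hx.trans hy'.symm) (k1 x y he)
  have hodd : Odd A.ncard := odd_side G hG E0 hE0sub hcard A hcrossA
  -- now case on the cardinality
  have hcases : (M ∩ E0).ncard = 0 ∨ (M ∩ E0).ncard = 1 ∨
      (M ∩ E0).ncard = 2 ∨ (M ∩ E0).ncard = 3 := by omega
  rcases hcases with h | h | h | h
  · exact Or.inl h
  · exact Or.inr h
  · -- case 2 : contradiction via 2-connectedness
    exfalso
    have hd1 : (E0 \ (M ∩ E0)).ncard = 1 := by
      rw [Set.ncard_diff Set.inter_subset_right hMEfin, hcard, h]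
    obtain ⟨e, hee⟩ := Set.ncard_eq_one.mp hd1
    have hediff : e ∈ E0 \ (M ∩ E0) := by rw [hee]; exact rfl
    have heE0 : e ∈ E0 := hediff.1
    have heM : e ∉ M := fun hmem => hediff.2 ⟨hmem, heE0⟩
    have hcover : E0 ⊆ M ∪ {e} := by
      intro f hf
      by_cases hfM : f ∈ M
      · exact Or.inl hfM
      · right
        have : f ∈ E0 \ (M ∩ E0) := ⟨hf, fun hmem => hfM hmem.1⟩
        rw [hee] at this
        exact this
    obtain ⟨x, y, rfl⟩ := sym2_rep e
    have hadj : G.Adj x y := (G.mem_edgeSet).mp (hE0sub heE0)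
    have hnr : ¬(G.deleteEdges E0).Reachable x y := k1 x y heE0
    set H := G.deleteEdges M with hHdef
    have hHadj : H.Adj x y := by
      rw [hHdef, deleteEdges_adj]; exact ⟨hadj, heM⟩
    set c := H.connectedComponentMk x with hcdef
    have hx : x ∈ c.supp := by
      rw [ConnectedComponent.mem_supp_iff]
    have hy : y ∈ c.supp := by
      rw [ConnectedComponent.mem_supp_iff, hcdef, ConnectedComponent.eq]
      exact hHadj.symm.reachable
    -- find a neighbor z of x distinct from y with edge not in M
    have hzex : ∃ z, G.Adj x z ∧ z ≠ y ∧ s(x,z) ∉ M := by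
      by_contra hno
      push_neg at hno
      have hyN : y ∈ {w | G.Adj x w} := hadj
      have hN : ({w | G.Adj x w} \ {y}).ncard = 2 := by
        rw [Set.ncard_diff_singleton_of_mem hyN]
        have h3 : ({w | G.Adj x w}).ncard = 3 := hG x
        omega
      obtain ⟨z1, z2, hz12, hzz⟩ := Set.ncard_eq_two.mp hN
      have hz1 : z1 ∈ {w | G.Adj x w} \ {y} := by rw [hzz]; exact Or.inl rfl
      have hz2 : z2 ∈ {w | G.Adj x w} \ {y} := by rw [hzz]; exact Or.inr rfl
      have hm1 : s(x, z1) ∈ M := hno z1 hz1.1 hz1.2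
      have hm2 : s(x, z2) ∈ M := hno z2 hz2.1 hz2.2
      have hnecc : s(x, z1) ≠ s(x, z2) := by
        intro hcontra
        rw [Sym2.eq_iff] at hcontra
        rcases hcontra with ⟨-, h12⟩ | ⟨hxz2, -⟩
        · exact hz12 h12
        · exact (hxz2 ▸ (hz2.1 : G.Adj x z2)).ne rfl
      exact hM.1.2 _ hm1 _ hm2 hnecc x ⟨Sym2.mem_mk_left x z1, Sym2.mem_mk_left x z2⟩
    obtain ⟨z, hxz, hzy, hzM⟩ := hzex
    have hHxz : H.Adj x z := by
      rw [hHdef, deleteEdges_adj]; exact ⟨hxz, hzM⟩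
    have hzc : z ∈ c.supp := by
      rw [ConnectedComponent.mem_supp_iff, hcdef, ConnectedComponent.eq]
      exact hHxz.symm.reachable
    have hzx : z ≠ x := (hxz.ne).symm
    have hyx : y ≠ x := (hadj.ne).symm
    have htc := ((hM.2 c).1).2 (⟨x, hx⟩ : ↥c.supp)
    have haz : (⟨z, hzc⟩ : ↥c.supp) ∈ ({(⟨x, hx⟩ : ↥c.supp)} : Set ↥c.supp)ᶜ := by
      simp only [Set.mem_compl_iff, Set.mem_singleton_iff]
      exact fun hcontra => hzx (congrArg Subtype.val hcontra)
    have hay : (⟨y, hy⟩ : ↥c.supp) ∈ ({(⟨x, hx⟩ : ↥c.supp)} : Set ↥c.supp)ᶜ := by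
      simp only [Set.mem_compl_iff, Set.mem_singleton_iff]
      exact fun hcontra => hyx (congrArg Subtype.val hcontra)
    have hreach := htc.preconnected ⟨⟨z, hzc⟩, haz⟩ ⟨⟨y, hy⟩, hay⟩
    -- map down to G.deleteEdges (M ∪ {s(x,y)})
    have hmap : ∀ (a b : ↥(({(⟨x, hx⟩ : ↥c.supp)} : Set ↥c.supp)ᶜ)),
        ((H.induce c.supp).induce ({(⟨x, hx⟩ : ↥c.supp)} : Set ↥c.supp)ᶜ).Adj a b →
        (G.deleteEdges (M ∪ {s(x,y)})).Adj (a.1.1) (b.1.1) := by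
      rintro a b hab
      have hab' : H.Adj (a.1.1) (b.1.1) := hab
      simp only [hHdef, deleteEdges_adj] at hab'
      rw [deleteEdges_adj]
      refine ⟨hab'.1, ?_⟩
      rintro (hm | hm)
      · exact hab'.2 hm
      · rw [Set.mem_singleton_iff, Sym2.eq_iff] at hm
        have hax : (a.1.1 : V) ≠ x := by
          intro hcontra
          exact a.2 (Set.mem_singleton_iff.mpr (Subtype.ext hcontra))
        have hbx : (b.1.1 : V) ≠ x := by
          intro hcontra
          exact b.2 (Set.mem_singleton_iff.mpr (Subtype.ext hcontra))
        rcases hm with ⟨h1, -⟩ | ⟨-, h2⟩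
        · exact hax h1
        · exact hbx h2
    let f : ((H.induce c.supp).induce ({(⟨x, hx⟩ : ↥c.supp)} : Set ↥c.supp)ᶜ) →g
        (G.deleteEdges (M ∪ {s(x,y)})) :=
      ⟨fun w => w.1.1, fun {a b} hab => hmap a b hab⟩
    have hr2 : (G.deleteEdges (M ∪ {s(x,y)})).Reachable z y := hreach.map f
    have hxzadj : (G.deleteEdges (M ∪ {s(x,y)})).Adj x z := by
      rw [deleteEdges_adj]
      refine ⟨hxz, ?_⟩
      rintro (hm | hm)
      · exact hzM hm
      · rw [Set.mem_singleton_iff, Sym2.eq_iff] at hm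
        rcases hm with ⟨-, h1⟩ | ⟨h1, -⟩
        · exact hzy h1
        · exact hadj.ne h1
    have hr3 : (G.deleteEdges (M ∪ {s(x,y)})).Reachable x y :=
      hxzadj.reachable.trans hr2
    exact hnr (hr3.mono (deleteEdges_anti hcover))
  · -- case 3 : contradiction via parity
    exfalso
    have hME : M ∩ E0 = E0 := by
      apply Set.eq_of_subset_of_ncard_le Set.inter_subset_right _ hE0fin
      rw [hcard, h]
    have hsubM : E0 ⊆ M := hME ▸ Set.inter_subset_left
    set H := G.deleteEdges M with hHdef
    have hHle : H ≤ G.deleteEdges E0 := deleteEdges_anti hsubM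
    set S : Finset H.ConnectedComponent :=
      Finset.univ.filter (fun c => c.supp ⊆ A) with hSdef
    have hA : A.toFinset = S.biUnion (fun c => c.supp.toFinset) := by
      ext v
      simp only [Set.mem_toFinset, Finset.mem_biUnion, hSdef, Finset.mem_filter,
        Finset.mem_univ, true_and]
      constructor
      · intro hv
        refine ⟨H.connectedComponentMk v, ?_, ?_⟩
        · intro u hu
          rw [ConnectedComponent.mem_supp_iff, ConnectedComponent.eq] at hu
          exact Set.mem_setOf.mpr ((hu.mono hHle).trans hv)
        · rw [ConnectedComponent.mem_supp_iff]
      · rintro ⟨c, hc, hv⟩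
        exact hc hv
    have hcardA : A.toFinset.card = ∑ c ∈ S, c.supp.toFinset.card := by
      rw [hA]
      apply Finset.card_biUnion
      intro c1 _ c2 _ hnecc
      rw [Function.onFun, Finset.disjoint_left]
      intro a ha1 ha2
      rw [Set.mem_toFinset, ConnectedComponent.mem_supp_iff] at ha1 ha2
      exact hnecc (ha1 ▸ ha2 ▸ rfl)
    have heven : Even A.toFinset.card := by
      rw [hcardA]
      apply Finset.even_sum
      intro c _
      have := (hM.2 c).2
      rwa [Set.ncard_eq_toFinset_card'] at this
    rw [Set.ncard_eq_toFinset_card'] at hodd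
    exact (Nat.not_even_iff_odd.mpr hodd) heven
end

section
/- If M is a matching of P_10 such that every component of P_10 − M is 2-connected with an even number of vertices, then P_10 − M is not a hamiltonian circuit, and P_10 − M is homeomorphic to a 2-connected cubic graph. -/
open SimpleGraph

section Stmt15Aux

open SimpleGraph

instance petAdjDec : DecidableRel Pet.Adj := fun a b =>
  inferInstanceAs (Decidable (a ≠ b ∧ ((a,b) ∈ petEdges ∨ (b,a) ∈ petEdges)))

/-- Every vertex of the Petersen graph has exactly 3 neighbors. -/
private lemma petDeg : ∀ v : Fin 10, (Finset.univ.filter (fun w => Pet.Adj v w)).card = 3 := by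
  decide

private lemma matched_unique {M : Set (Sym2 (Fin 10))} (hM : IsMatchingSet Pet M) :
    ∀ v w w' : Fin 10, Pet.Adj v w → s(v,w) ∈ M → Pet.Adj v w' → s(v,w') ∈ M → w = w' := by
  intro v w w' hw hwm hw' hwm'
  by_contra hne
  have hedne : s(v,w) ≠ s(v,w') := fun h => hne (Sym2.congr_right.mp h)
  exact hM.2 _ hwm _ hwm' hedne v ⟨Sym2.mem_mk_left v w, Sym2.mem_mk_left v w'⟩

private lemma hdeg_del {M : Set (Sym2 (Fin 10))} (hM : IsMatchingSet Pet M) (v : Fin 10) :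
    2 ≤ hdeg (Pet.deleteEdges M) v ∧
      (hdeg (Pet.deleteEdges M) v = 2 → ∃ w, Pet.Adj v w ∧ s(v,w) ∈ M) := by
  classical
  set N : Finset (Fin 10) := Finset.univ.filter (fun w => Pet.Adj v w) with hN
  set B : Finset (Fin 10) := N.filter (fun w => s(v,w) ∈ M) with hB
  set A : Finset (Fin 10) := N.filter (fun w => s(v,w) ∉ M) with hA
  have hsum : B.card + A.card = 3 := by
    rw [hB, hA, Finset.card_filter_add_card_filter_not, hN, petDeg]
  have hB1 : B.card ≤ 1 := by
    rw [Finset.card_le_one]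
    intro a ha b hb
    rw [hB, Finset.mem_filter, hN, Finset.mem_filter] at ha hb
    exact matched_unique hM v a b ha.1.2 ha.2 hb.1.2 hb.2
  have hset : {w | (Pet.deleteEdges M).Adj v w} = (A : Set (Fin 10)) := by
    ext w
    simp [hA, hN, SimpleGraph.deleteEdges_adj]
  have hcard : hdeg (Pet.deleteEdges M) v = A.card := by
    rw [hdeg, hset, Set.ncard_coe_finset]
  constructor
  · omega
  · intro h2
    have : B.card = 1 := by omega
    obtain ⟨w, hw⟩ := Finset.card_eq_one.mp this
    have hwB : w ∈ B := by rw [hw]; exact Finset.mem_singleton_self w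
    rw [hB, Finset.mem_filter, hN, Finset.mem_filter] at hwB
    exact ⟨w, hwB.1.2, hwB.2⟩

private lemma induce_walk_out {V : Type*} {G : SimpleGraph V} {s : Set V}
    (h : (G.induce s).Connected) {x y : V} (hx : x ∈ s) (hy : y ∈ s) :
    ∃ w : G.Walk x y, ∀ z ∈ w.support, z ∈ s := by
  obtain ⟨p⟩ := h.preconnected ⟨x, hx⟩ ⟨y, hy⟩
  refine ⟨p.map (SimpleGraph.Embedding.induce s).toHom, ?_⟩
  intro z hz
  replace hz : z ∈ (p.map (SimpleGraph.Embedding.induce s).toHom).support := hz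
  rw [SimpleGraph.Walk.support_map, List.mem_map] at hz
  obtain ⟨u, _, rfl⟩ := hz
  exact u.2

private lemma walk_stay {V : Type*} {G : SimpleGraph V} {S : Set V}
    (hcl : ∀ u w, u ∈ S → G.Adj u w → w ∈ S) :
    ∀ {x y : V}, G.Walk x y → x ∈ S → y ∈ S := by
  intro x y w
  induction w with
  | nil => exact id
  | cons h p ih => exact fun hx => ih (hcl _ _ hx h)

private lemma twoConnected_nbrs {W : Type*} [Finite W] {H : SimpleGraph W}
    (h : TwoConnected H) (v : W) : ∃ a b : W, a ≠ b ∧ H.Adj v a ∧ H.Adj v b := by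
  cases nonempty_fintype W
  have hcard : 3 ≤ Fintype.card W := by
    rw [← Nat.card_eq_fintype_card]; exact h.1
  classical
  have key : ∀ u : W, u ≠ v → ∃ a, H.Adj v a ∧ a ≠ u := by
    intro u hu
    have hconn := h.2 u
    have hv : v ∈ ({u}ᶜ : Set W) := by simp [Ne.symm hu]
    obtain ⟨w, hwu, hwv⟩ : ∃ w : W, w ≠ u ∧ w ≠ v := by
      by_contra hcon
      push_neg at hcon
      have hsub : (Finset.univ : Finset W) ⊆ {u, v} := by
        intro x _
        rcases eq_or_ne x u with rfl | hxu
        · exact Finset.mem_insert_self _ _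
        · simp [hcon x hxu]
      have h2 := Finset.card_le_card hsub
      have h3 : ({u, v} : Finset W).card ≤ 2 :=
        le_trans (Finset.card_insert_le _ _) (by simp)
      rw [Finset.card_univ] at h2
      omega
    have hw : w ∈ ({u}ᶜ : Set W) := by simp [hwu]
    obtain ⟨p⟩ := hconn.preconnected ⟨v, hv⟩ ⟨w, hw⟩
    have hne : (⟨v, hv⟩ : ↥({u}ᶜ : Set W)) ≠ ⟨w, hw⟩ := by
      intro hcon; exact hwv (congrArg Subtype.val hcon).symm
    have hnn : ¬ p.Nil := SimpleGraph.Walk.not_nil_of_ne hne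
    rw [SimpleGraph.Walk.not_nil_iff] at hnn
    obtain ⟨y, hadj, q, -⟩ := hnn
    exact ⟨y.val, hadj, y.2⟩
  obtain ⟨u0, hu0⟩ := Fintype.exists_ne_of_one_lt_card (by omega) v
  obtain ⟨a, hadj_a, -⟩ := key u0 hu0
  obtain ⟨b, hadj_b, hba⟩ := key a hadj_a.ne'
  exact ⟨b, a, hba, hadj_b, hadj_a⟩

set_option maxRecDepth 40000 in
set_option synthInstance.maxHeartbeats 2000000 in
set_option synthInstance.maxSize 2000 in
set_option maxHeartbeats 2000000 in
private lemma F1 : ∀ a b c d : Fin 10, a≠b → a≠c → a≠d → b≠c → b≠d → c≠d →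
    ¬ (∀ x ∈ [a,b,c,d], ∃ u ∈ [a,b,c,d], ∃ v ∈ [a,b,c,d],
        u ≠ v ∧ Pet.Adj x u ∧ Pet.Adj x v) := by decide

/-- The five-element vertex sets that can appear as a component of the complement
of a perfect matching of the Petersen graph (each containing the vertex 0). -/
private def SList : List (List (Fin 10)) :=
  [[0,3,4,5,8],[0,4,5,7,9],[0,1,4,6,9],[0,1,5,6,8],[0,1,2,5,7],[0,1,2,3,4]]

private abbrev Concl (p0 p1 p2 p3 p4 p5 p6 p7 p8 p9 : Fin 10) : Prop :=
  ∃ S ∈ SList, (0 : Fin 10) ∈ S ∧ (∃ x : Fin 10, x ∉ S) ∧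
    ∀ a ∈ S, ∀ b : Fin 10, Pet.Adj a b → b ∉ S →
      [p0,p1,p2,p3,p4,p5,p6,p7,p8,p9].getD a.val 0 = b

set_option maxRecDepth 40000 in
set_option synthInstance.maxHeartbeats 2000000 in
set_option synthInstance.maxSize 2000 in
set_option maxHeartbeats 2000000 in
private lemma MEGA : ∀ p0 : Fin 10, Pet.Adj 0 p0 → ∀ p1, Pet.Adj 1 p1 →
    (p0 = 1 → p1 = 0) → (p1 = 0 → p0 = 1) →
    ∀ p2, Pet.Adj 2 p2 → (p1 = 2 → p2 = 1) → (p2 = 1 → p1 = 2) →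
    ∀ p3, Pet.Adj 3 p3 → (p2 = 3 → p3 = 2) → (p3 = 2 → p2 = 3) →
    ∀ p4, Pet.Adj 4 p4 → (p3 = 4 → p4 = 3) → (p4 = 3 → p3 = 4) →
      (p0 = 4 → p4 = 0) → (p4 = 0 → p0 = 4) →
    ∀ p5, Pet.Adj 5 p5 → (p0 = 5 → p5 = 0) → (p5 = 0 → p0 = 5) →
    ∀ p6, Pet.Adj 6 p6 → (p1 = 6 → p6 = 1) → (p6 = 1 → p1 = 6) →
    ∀ p7, Pet.Adj 7 p7 → (p2 = 7 → p7 = 2) → (p7 = 2 → p2 = 7) →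
      (p5 = 7 → p7 = 5) → (p7 = 5 → p5 = 7) →
    ∀ p8, Pet.Adj 8 p8 → (p3 = 8 → p8 = 3) → (p8 = 3 → p3 = 8) →
      (p6 = 8 → p8 = 6) → (p8 = 6 → p6 = 8) → (p5 = 8 → p8 = 5) → (p8 = 5 → p5 = 8) →
    ∀ p9, Pet.Adj 9 p9 → (p4 = 9 → p9 = 4) → (p9 = 4 → p4 = 9) →
      (p7 = 9 → p9 = 7) → (p9 = 7 → p7 = 9) → (p6 = 9 → p9 = 6) → (p9 = 6 → p6 = 9) →
    Concl p0 p1 p2 p3 p4 p5 p6 p7 p8 p9 := by decide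

end Stmt15Aux

/-- if `M` is an `f`-matching of the Petersen graph, then
`P₁₀ - M` is not a hamiltonian circuit, and `P₁₀ - M` is homeomorphic to a
2-connected cubic graph (connected, bridgeless and not a circuit). -/
theorem stmt_15 (M : Set (Sym2 (Fin 10))) (hM : IsFMatching Pet M) :
    ¬((Pet.deleteEdges M).Connected ∧ ∀ v, hdeg (Pet.deleteEdges M) v = 2) ∧
    ((Pet.deleteEdges M).Connected ∧
      (∀ e, ¬ (Pet.deleteEdges M).IsBridge e) ∧
      ∃ v, hdeg (Pet.deleteEdges M) v ≠ 2) := by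
  classical
  obtain ⟨hMatch, hComp⟩ := hM
  have hdd := fun v => hdeg_del hMatch v
  -- every component has at least 3 vertices
  have hsupp3 : ∀ c : (Pet.deleteEdges M).ConnectedComponent, 3 ≤ c.supp.ncard := by
    intro c
    have := (hComp c).1.1
    rwa [Nat.card_coe_set_eq] at this
  -- no component has exactly 4 vertices (girth 5)
  have hsupp4 : ∀ c : (Pet.deleteEdges M).ConnectedComponent, c.supp.ncard ≠ 4 := by
    intro c h4
    have hfin : c.supp.Finite := Set.toFinite _
    have hcardF : hfin.toFinset.card = 4 := by
      rw [← Set.ncard_eq_toFinset_card _ hfin]; exact h4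
    obtain ⟨a, t, hat, hins, ht3⟩ := Finset.card_eq_succ.mp hcardF
    obtain ⟨b, c', d, hbc, hbd, hcd, ht⟩ := Finset.card_eq_three.mp ht3
    have hant : ¬(a = b ∨ a = c' ∨ a = d) := by
      intro h
      apply hat
      rw [ht]
      simpa using h
    push_neg at hant
    obtain ⟨hab, hac, had⟩ := hant
    have hmem : ∀ y, y ∈ c.supp ↔ (y = a ∨ y = b ∨ y = c' ∨ y = d) := by
      intro y
      rw [← hfin.mem_toFinset, ← hins, ht]
      simp
    have htc : TwoConnected ((Pet.deleteEdges M).induce c.supp) := (hComp c).1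
    refine F1 a b c' d hab hac had hbc hbd hcd ?_
    intro x hx
    have hxs : x ∈ c.supp := (hmem x).mpr (by simpa using hx)
    obtain ⟨u', v', huv, hu, hv⟩ := twoConnected_nbrs htc ⟨x, hxs⟩
    have hu' : (Pet.deleteEdges M).Adj x u'.val := hu
    have hv' : (Pet.deleteEdges M).Adj x v'.val := hv
    refine ⟨u'.val, ?_, v'.val, ?_, ?_, ?_, ?_⟩
    · simpa using (hmem u'.val).mp u'.2
    · simpa using (hmem v'.val).mp v'.2
    · exact fun h => huv (Subtype.ext h)
    · exact (SimpleGraph.deleteEdges_adj.mp hu').1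
    · exact (SimpleGraph.deleteEdges_adj.mp hv').1
  -- P₁₀ − M is connected
  have hconn : (Pet.deleteEdges M).Connected := by
    rw [SimpleGraph.connected_iff]
    refine ⟨?_, ⟨0⟩⟩
    intro u v
    by_contra hr
    have hne : (Pet.deleteEdges M).connectedComponentMk u ≠
        (Pet.deleteEdges M).connectedComponentMk v :=
      fun h => hr (SimpleGraph.ConnectedComponent.exact h)
    have hdisj : Disjoint ((Pet.deleteEdges M).connectedComponentMk u).supp
        ((Pet.deleteEdges M).connectedComponentMk v).supp := by
      rw [Set.disjoint_left]
      intro x h1 h2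
      rw [SimpleGraph.ConnectedComponent.mem_supp_iff] at h1 h2
      exact hne (h1 ▸ h2 ▸ rfl)
    have h6 : ∀ c : (Pet.deleteEdges M).ConnectedComponent, 6 ≤ c.supp.ncard := by
      intro c
      have h3 := hsupp3 c
      have h4 := hsupp4 c
      have he := (hComp c).2
      rw [Nat.even_iff] at he
      omega
    have hun := Set.ncard_union_eq hdisj (Set.toFinite _) (Set.toFinite _)
    have hle : (((Pet.deleteEdges M).connectedComponentMk u).supp ∪
        ((Pet.deleteEdges M).connectedComponentMk v).supp).ncard ≤ 10 := by
      have h := Set.ncard_le_ncard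
        (Set.subset_univ (((Pet.deleteEdges M).connectedComponentMk u).supp ∪
          ((Pet.deleteEdges M).connectedComponentMk v).supp))
        (Set.toFinite (Set.univ : Set (Fin 10)))
      rwa [Set.ncard_univ, Nat.card_eq_fintype_card, Fintype.card_fin] at h
    have h61 := h6 ((Pet.deleteEdges M).connectedComponentMk u)
    have h62 := h6 ((Pet.deleteEdges M).connectedComponentMk v)
    omega
  -- the unique component is everything, so P₁₀ − M is 2-connected
  have hsu : ((Pet.deleteEdges M).connectedComponentMk 0).supp = Set.univ := by
    ext x
    simp only [SimpleGraph.ConnectedComponent.mem_supp_iff, Set.mem_univ, iff_true]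
    exact SimpleGraph.ConnectedComponent.sound (hconn.preconnected x 0)
  have htc : TwoConnected ((Pet.deleteEdges M).induce (Set.univ : Set (Fin 10))) := by
    have := (hComp ((Pet.deleteEdges M).connectedComponentMk 0)).1
    rwa [hsu] at this
  -- walks avoiding a given vertex
  have havoid : ∀ a b c : Fin 10, b ≠ a → c ≠ a →
      ∃ w : (Pet.deleteEdges M).Walk c b, ∀ z ∈ w.support, z ≠ a := by
    intro a b c hb hc
    have h1 := htc.2 ⟨a, Set.mem_univ a⟩
    have hcm : (⟨c, Set.mem_univ c⟩ : ↥(Set.univ : Set (Fin 10))) ∈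
        ({(⟨a, Set.mem_univ a⟩ : ↥(Set.univ : Set (Fin 10)))}ᶜ : Set _) := by
      simp only [Set.mem_compl_iff, Set.mem_singleton_iff]
      exact fun h => hc (congrArg Subtype.val h)
    have hbm : (⟨b, Set.mem_univ b⟩ : ↥(Set.univ : Set (Fin 10))) ∈
        ({(⟨a, Set.mem_univ a⟩ : ↥(Set.univ : Set (Fin 10)))}ᶜ : Set _) := by
      simp only [Set.mem_compl_iff, Set.mem_singleton_iff]
      exact fun h => hb (congrArg Subtype.val h)
    obtain ⟨W1, hW1⟩ := induce_walk_out h1 hcm hbm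
    refine ⟨W1.map (SimpleGraph.Embedding.induce (Set.univ : Set (Fin 10))).toHom, ?_⟩
    intro z hz
    replace hz : z ∈ (W1.map (SimpleGraph.Embedding.induce (Set.univ : Set (Fin 10))).toHom).support := hz
    rw [SimpleGraph.Walk.support_map, List.mem_map] at hz
    obtain ⟨u, hu, rfl⟩ := hz
    intro hza
    have hu' : u = (⟨a, Set.mem_univ a⟩ : ↥(Set.univ : Set (Fin 10))) :=
      Subtype.ext (show (u : Fin 10) = a from hza)
    exact (hW1 u hu) (by rw [hu']; exact Set.mem_singleton _)
  -- no bridges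
  have hnb : ∀ e, ¬ (Pet.deleteEdges M).IsBridge e := by
    intro e
    induction e using Sym2.ind with
    | _ a b =>
      rw [SimpleGraph.isBridge_iff]
      intro hnr
      by_cases hab : a = b
      · subst hab; exact hnr (SimpleGraph.Reachable.refl _)
      apply hnr
      rw [SimpleGraph.reachable_delete_edges_iff_exists_walk]
      have h2 := (hdd a).1
      rw [hdeg] at h2
      obtain ⟨c, hc, hcb⟩ := Set.exists_ne_of_one_lt_ncard
        (s := {w | (Pet.deleteEdges M).Adj a w}) (by omega) b
      have hc' : (Pet.deleteEdges M).Adj a c := hc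
      obtain ⟨W, hW⟩ := havoid a b c (Ne.symm hab) hc'.ne'
      refine ⟨SimpleGraph.Walk.cons hc' W, ?_⟩
      rw [SimpleGraph.Walk.edges_cons]
      intro hmem
      rcases List.mem_cons.mp hmem with h | h
      · exact hcb (Sym2.congr_right.mp h.symm)
      · exact hW a (W.fst_mem_support_of_mem_edges h) rfl
  -- not 2-regular
  have hne2 : ∃ v, hdeg (Pet.deleteEdges M) v ≠ 2 := by
    by_contra hcon
    push_neg at hcon
    have hex : ∀ v : Fin 10, ∃ w, Pet.Adj v w ∧ s(v,w) ∈ M := fun v => (hdd v).2 (hcon v)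
    set p : Fin 10 → Fin 10 := fun v => Classical.choose (hex v) with hp
    have hp1 : ∀ v, Pet.Adj v (p v) := fun v => (Classical.choose_spec (hex v)).1
    have hp2 : ∀ v, s(v, p v) ∈ M := fun v => (Classical.choose_spec (hex v)).2
    have hinv : ∀ v, p (p v) = v := by
      intro v
      have hswap : s(p v, v) ∈ M := by rw [Sym2.eq_swap]; exact hp2 v
      exact matched_unique hMatch (p v) _ _ (hp1 (p v)) (hp2 (p v)) (hp1 v).symm hswap
    have hkey : ∀ i j : Fin 10, p i = j → p j = i := fun i j h => by rw [← h, hinv]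
    have hcl := MEGA (p 0) (hp1 0) (p 1) (hp1 1) (hkey _ _) (hkey _ _)
        (p 2) (hp1 2) (hkey _ _) (hkey _ _) (p 3) (hp1 3) (hkey _ _) (hkey _ _)
        (p 4) (hp1 4) (hkey _ _) (hkey _ _) (hkey _ _) (hkey _ _)
        (p 5) (hp1 5) (hkey _ _) (hkey _ _) (p 6) (hp1 6) (hkey _ _) (hkey _ _)
        (p 7) (hp1 7) (hkey _ _) (hkey _ _) (hkey _ _) (hkey _ _)
        (p 8) (hp1 8) (hkey _ _) (hkey _ _) (hkey _ _) (hkey _ _) (hkey _ _) (hkey _ _)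
        (p 9) (hp1 9) (hkey _ _) (hkey _ _) (hkey _ _) (hkey _ _) (hkey _ _) (hkey _ _)
    obtain ⟨S, hSmem, h0S, ⟨x, hxS⟩, hcross⟩ := hcl
    have hget : ∀ a : Fin 10,
        [p 0, p 1, p 2, p 3, p 4, p 5, p 6, p 7, p 8, p 9].getD a.val 0 = p a := by
      intro a; fin_cases a <;> rfl
    have hclosed : ∀ u w : Fin 10, u ∈ ({y | y ∈ S} : Set (Fin 10)) →
        (Pet.deleteEdges M).Adj u w → w ∈ ({y | y ∈ S} : Set (Fin 10)) := by
      intro u w hu hadj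
      by_contra hw
      rw [SimpleGraph.deleteEdges_adj] at hadj
      have hcr := hcross u hu w hadj.1 hw
      rw [hget] at hcr
      have h5 := hp2 u
      rw [hcr] at h5
      exact hadj.2 h5
    obtain ⟨W⟩ := hconn.preconnected 0 x
    exact hxS (walk_stay hclosed W h0S)
  refine ⟨?_, hconn, hnb, hne2⟩
  rintro ⟨-, hreg⟩
  obtain ⟨v, hv⟩ := hne2
  exact hv (hreg v)
end

section
/- Define p_k as the maximum over vertices v of P^k of the minimum, over paths α from v to the set W_k of 2-valent vertices of P^k, of the number of distinct copies of P met by α. Then p_0 = 1 and p_{k+1} = 2^{2k+1} for all natural numbers k. -/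
open SimpleGraph

-- ===== auxiliary development =====

set_option linter.unusedSectionVars false

instance inst_s17 : DecidableRel Pgr.Adj := fun a b =>
  decidable_of_iff (a ≠ b ∧ ((a,b) ∈ pEdges ∨ (b,a) ∈ pEdges)) (by rw [Pgr, SimpleGraph.fromRel_adj])

def isPort (p : Fin 9) : Prop := p = 4 ∨ p = 6 ∨ p = 7
instance : DecidablePred isPort := fun p => by unfold isPort; infer_instance

/-- distance table to ports: dP p i = dist(i,p) for p ∈ {4,6,7} -/
def dP : Fin 9 → Fin 9 → ℕ :=
  ![![0,0,0,0,0,0,0,0,0],![0,0,0,0,0,0,0,0,0],![0,0,0,0,0,0,0,0,0],![0,0,0,0,0,0,0,0,0],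
    ![1,2,2,1,0,2,3,3,2],![0,0,0,0,0,0,0,0,0],![2,1,2,2,3,2,0,3,1],![2,2,1,2,3,1,3,0,2],
    ![0,0,0,0,0,0,0,0,0]]

lemma dlip : ∀ p i j, isPort p → Pgr.Adj i j → dP p i ≤ dP p j + 1 := by decide
lemma ddesc : ∀ p i, isPort p → dP p i ≠ 0 → ∃ j, Pgr.Adj i j ∧ dP p j + 1 = dP p i := by decide
lemma dbound : ∀ p i, isPort p → dP p i ≤ 3 := by decide
lemma dzero : ∀ p i, isPort p → (dP p i = 0 ↔ i = p) := by decide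
lemma dsep : ∀ p q, isPort p → isPort q → p ≠ q → dP p q = 3 := by decide

lemma hdeg_eq_filter {n : ℕ} (G : SimpleGraph (Fin n)) [DecidableRel G.Adj] (v : Fin n) :
    hdeg G v = (Finset.univ.filter (fun w => G.Adj v w)).card := by
  rw [hdeg, show {w | G.Adj v w} = ↑(Finset.univ.filter (fun w => G.Adj v w)) by
    ext w; simp, Set.ncard_coe_finset]

lemma hdegPgr : ∀ v, (isPort v → hdeg Pgr v = 2) ∧ (¬ isPort v → hdeg Pgr v = 3) := by
  intro v
  rw [hdeg_eq_filter]
  revert v; decide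

lemma exists_walk_dP (p : Fin 9) (hp : isPort p) (i : Fin 9) :
    ∃ w : Pgr.Walk i p, w.length = dP p i := by
  generalize hn : dP p i = n
  induction n generalizing i with
  | zero => cases (dzero p i hp).1 hn; exact ⟨Walk.nil, by simpa using hn.symm⟩
  | succ n ih =>
    obtain ⟨j, hadj, hj⟩ := ddesc p i hp (by omega)
    obtain ⟨w, hw⟩ := ih j (by omega)
    exact ⟨Walk.cons hadj w, by simp only [Walk.length_cons, hw, hj]⟩

section Step
variable (A : GE)

lemma step_adj (a b : A.V × Fin 9) :
    (step A).G.Adj a b ↔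
      (a.1 = b.1 ∧ Pgr.Adj a.2 b.2) ∨
      (A.G.Adj a.1 b.1 ∧ a.2 = port A.G A.enc a.1 b.1 ∧ b.2 = port A.G A.enc b.1 a.1) :=
  Iff.rfl

lemma portIdx_isPort (n : ℕ) : isPort (portIdx n) := by
  unfold isPort portIdx
  rcases n with _ | _ | n <;> simp

lemma port_isPort (u v : A.V) : isPort (port A.G A.enc u v) := portIdx_isPort _

lemma portIdx_inj_s17 {m n : ℕ} (hm : m < 3) (hn : n < 3) (h : portIdx m = portIdx n) : m = n := by
  interval_cases m <;> interval_cases n <;> simp_all [portIdx]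

variable [Finite A.V]

/-- the counting set for ports -/
lemma count_lt {u v : A.V} (h : A.G.Adj u v) :
    Nat.card {w : A.V | A.G.Adj u w ∧ A.enc w < A.enc v} < hdeg A.G u := by
  rw [hdeg, ← Nat.card_coe_set_eq]
  have hss : {w : A.V | A.G.Adj u w ∧ A.enc w < A.enc v} ⊂ {w | A.G.Adj u w} := by
    constructor
    · intro w hw; exact hw.1
    · intro hsub
      exact absurd (hsub h).2 (lt_irrefl _)
  rw [Nat.card_coe_set_eq, Nat.card_coe_set_eq]
  exact Set.ncard_lt_ncard hss (Set.toFinite _)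

variable (hinj : Function.Injective A.enc)
variable (hdeg23 : ∀ v, hdeg A.G v = 2 ∨ hdeg A.G v = 3)

include hinj hdeg23 in
lemma port_inj_s17 {u v v' : A.V} (h1 : A.G.Adj u v) (h2 : A.G.Adj u v') (hne : v ≠ v') :
    port A.G A.enc u v ≠ port A.G A.enc u v' := by
  have hlt3 : ∀ {x : A.V}, A.G.Adj u x → Nat.card {w : A.V | A.G.Adj u w ∧ A.enc w < A.enc x} < 3 := by
    intro x hx
    have := count_lt A hx
    rcases hdeg23 u with h | h <;> omega
  have key : ∀ {x y : A.V}, A.G.Adj u x → A.G.Adj u y → A.enc x < A.enc y →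
      Nat.card {w : A.V | A.G.Adj u w ∧ A.enc w < A.enc x} <
      Nat.card {w : A.V | A.G.Adj u w ∧ A.enc w < A.enc y} := by
    intro x y hx hy hxy
    rw [Nat.card_coe_set_eq, Nat.card_coe_set_eq]
    apply Set.ncard_lt_ncard _ (Set.toFinite _)
    constructor
    · intro w hw; exact ⟨hw.1, hw.2.trans hxy⟩
    · intro hsub
      exact absurd (hsub ⟨hx, hxy⟩).2 (lt_irrefl _)
  intro heq
  have henc : A.enc v ≠ A.enc v' := fun h => hne (hinj h)
  rcases lt_or_gt_of_ne henc with hlt | hlt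
  · exact absurd (portIdx_inj_s17 (hlt3 h1) (hlt3 h2) heq) (Nat.ne_of_lt (key h1 h2 hlt))
  · exact absurd (portIdx_inj_s17 (hlt3 h1) (hlt3 h2) heq) (Nat.ne_of_gt (key h2 h1 hlt))

end Step

section StepDeg
variable (A : GE) [Finite A.V]
variable (hinj : Function.Injective A.enc)
variable (hdeg23 : ∀ v, hdeg A.G v = 2 ∨ hdeg A.G v = 3)

def usedPort (u : A.V) (i : Fin 9) : Prop := ∃ v, A.G.Adj u v ∧ port A.G A.enc u v = i

lemma nbhd_eq (u : A.V) (i : Fin 9) :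
    {b | (step A).G.Adj (u,i) b} =
      (fun j => (u,j)) '' {j | Pgr.Adj i j} ∪
      {b : A.V × Fin 9 | A.G.Adj u b.1 ∧ i = port A.G A.enc u b.1 ∧ b.2 = port A.G A.enc b.1 u} := by
  ext b
  erw [Set.mem_setOf_eq, step_adj]
  obtain ⟨b1, b2⟩ := b
  constructor
  · rintro (⟨h1, h2⟩ | h)
    · simp only at h1 h2
      subst h1
      exact Or.inl ⟨b2, h2, rfl⟩
    · exact Or.inr h
  · rintro (⟨j, hj, hb⟩ | h)
    · simp only [Prod.mk.injEq] at hb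
      obtain ⟨rfl, rfl⟩ := hb
      exact Or.inl ⟨rfl, hj⟩
    · exact Or.inr h

include hinj hdeg23 in
lemma hdeg_step_unused (u : A.V) (i : Fin 9) (hu : ¬ usedPort A u i) :
    hdeg (step A).G (u,i) = hdeg Pgr i := by
  erw [hdeg, nbhd_eq]
  have he : {b : A.V × Fin 9 | A.G.Adj u b.1 ∧ i = port A.G A.enc u b.1 ∧ b.2 = port A.G A.enc b.1 u} = ∅ := by
    ext b; simp only [Set.mem_setOf_eq, Set.mem_empty_iff_false, iff_false]
    rintro ⟨h1, h2, h3⟩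
    exact hu ⟨b.1, h1, h2.symm⟩
  erw [he, Set.union_empty, Set.ncard_image_of_injective _ (fun a b h => by simpa using congrArg Prod.snd h)]
  rfl

include hinj hdeg23 in
lemma hdeg_step_used (u : A.V) (i : Fin 9) {v0 : A.V} (hv0 : A.G.Adj u v0)
    (hp : port A.G A.enc u v0 = i) :
    hdeg (step A).G (u,i) = hdeg Pgr i + 1 := by
  erw [hdeg, nbhd_eq]
  have he : {b : A.V × Fin 9 | A.G.Adj u b.1 ∧ i = port A.G A.enc u b.1 ∧ b.2 = port A.G A.enc b.1 u}
      = {(v0, port A.G A.enc v0 u)} := by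
    ext b
    simp only [Set.mem_setOf_eq, Set.mem_singleton_iff]
    constructor
    · rintro ⟨h1, h2, h3⟩
      have hb1 : b.1 = v0 := by
        by_contra hne
        exact port_inj_s17 A hinj hdeg23 h1 hv0 hne (by rw [← h2, hp])
      rw [Prod.ext_iff]; exact ⟨hb1, by rw [h3, hb1]⟩
    · rintro rfl
      exact ⟨hv0, hp.symm, rfl⟩
  haveI : Finite (step A).V := inferInstanceAs (Finite (A.V × Fin 9))
  erw [he, Set.ncard_union_eq _ (Set.toFinite _) (Set.toFinite _),
    Set.ncard_image_of_injective _ (fun a b h => by simpa using congrArg Prod.snd h),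
    Set.ncard_singleton]
  · rfl
  · erw [Set.disjoint_singleton_right]
    rintro ⟨j, -, hj⟩
    have : u = v0 := congrArg Prod.fst hj
    exact A.G.ne_of_adj hv0 this

lemma isPort_iff (i : Fin 9) : isPort i ↔ i ∈ ({4, 6, 7} : Set (Fin 9)) := by
  simp [isPort]

include hinj hdeg23 in
lemma ncard_used (u : A.V) : {i | usedPort A u i}.ncard = hdeg A.G u := by
  have he : {i | usedPort A u i} = (fun v => port A.G A.enc u v) '' {v | A.G.Adj u v} := by
    ext i
    simp only [Set.mem_setOf_eq, Set.mem_image, usedPort]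
  rw [he, Set.ncard_image_of_injOn, hdeg]
  intro v hv v' hv' h
  by_contra hne
  exact port_inj_s17 A hinj hdeg23 hv hv' hne h

lemma used_isPort {u : A.V} {i : Fin 9} (h : usedPort A u i) : isPort i := by
  obtain ⟨v, -, rfl⟩ := h
  exact port_isPort A u v

lemma used_deg2_sub {u : A.V} (hu : hdeg A.G u = 2) :
    {i | usedPort A u i} ⊆ ({4, 6} : Set (Fin 9)) := by
  rintro i ⟨v, hv, rfl⟩
  have hc := count_lt A hv
  rw [hu] at hc
  unfold port
  interval_cases h : (Nat.card {w : A.V | A.G.Adj u w ∧ A.enc w < A.enc v}) <;>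
    simp [portIdx]

include hinj hdeg23 in
lemma used_deg3 {u : A.V} (hu : hdeg A.G u = 3) :
    {i | usedPort A u i} = ({4, 6, 7} : Set (Fin 9)) := by
  refine Set.eq_of_subset_of_ncard_le ?_ ?_ (Set.toFinite _)
  · intro i hi
    rw [← isPort_iff]
    exact used_isPort A hi
  · rw [ncard_used A hinj hdeg23, hu,
      Set.ncard_insert_of_notMem (by simp), Set.ncard_insert_of_notMem (by simp),
      Set.ncard_singleton]

include hinj hdeg23 in
lemma used_deg2 {u : A.V} (hu : hdeg A.G u = 2) :
    {i | usedPort A u i} = ({4, 6} : Set (Fin 9)) := by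
  refine (Set.eq_of_subset_of_ncard_le (used_deg2_sub A hu) ?_ (Set.toFinite _))
  rw [ncard_used A hinj hdeg23, hu, Set.ncard_insert_of_notMem (by simp), Set.ncard_singleton]

include hinj hdeg23 in
lemma used_deg3_iff {u : A.V} (hu : hdeg A.G u = 3) (i : Fin 9) :
    usedPort A u i ↔ (i = 4 ∨ i = 6 ∨ i = 7) := by
  have := Set.ext_iff.1 (used_deg3 A hinj hdeg23 hu) i
  simpa using this

include hinj hdeg23 in
lemma used_deg2_iff {u : A.V} (hu : hdeg A.G u = 2) (i : Fin 9) :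
    usedPort A u i ↔ (i = 4 ∨ i = 6) := by
  have := Set.ext_iff.1 (used_deg2 A hinj hdeg23 hu) i
  simpa using this

include hinj hdeg23 in
lemma hdeg_step_two_iff (u : A.V) (i : Fin 9) :
    hdeg (step A).G (u, i) = 2 ↔ (hdeg A.G u = 2 ∧ i = 7) := by
  rcases hdeg23 u with hu | hu
  · constructor
    · intro h2
      refine ⟨hu, ?_⟩
      by_contra hne
      by_cases hi : usedPort A u i
      · have hP : isPort i := used_isPort A hi
        have h2P := (hdegPgr i).1 hP
        rw [hdeg_step_used A hinj hdeg23 u i] at h2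
        · omega
        · exact hi.choose_spec.1
        · exact hi.choose_spec.2
      · rw [hdeg_step_unused A hinj hdeg23 u i hi] at h2
        by_cases hP : isPort i
        · rcases hP with rfl | rfl | rfl
          · exact hi ((used_deg2_iff A hinj hdeg23 hu 4).2 (Or.inl rfl))
          · exact hi ((used_deg2_iff A hinj hdeg23 hu 6).2 (Or.inr rfl))
          · exact hne rfl
        · have := (hdegPgr i).2 hP
          omega
    · rintro ⟨hu2, rfl⟩
      have hni : ¬ usedPort A u 7 := by
        rw [used_deg2_iff A hinj hdeg23 hu2 7]
        simp
      rw [hdeg_step_unused A hinj hdeg23 u 7 hni]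
      exact (hdegPgr 7).1 (by right; right; rfl)
  · constructor
    · intro h2
      exfalso
      by_cases hP : isPort i
      · have hi : usedPort A u i := (used_deg3_iff A hinj hdeg23 hu i).2 hP
        rw [hdeg_step_used A hinj hdeg23 u i hi.choose_spec.1 hi.choose_spec.2] at h2
        have := (hdegPgr i).1 hP
        omega
      · have hni : ¬ usedPort A u i := fun h => hP (used_isPort A h)
        rw [hdeg_step_unused A hinj hdeg23 u i hni] at h2
        have := (hdegPgr i).2 hP
        omega
    · rintro ⟨hu2, -⟩
      omega

include hinj hdeg23 in
lemma hdeg_step_23 (u : A.V) (i : Fin 9) :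
    hdeg (step A).G (u, i) = 2 ∨ hdeg (step A).G (u, i) = 3 := by
  by_cases hi : usedPort A u i
  · rw [hdeg_step_used A hinj hdeg23 u i hi.choose_spec.1 hi.choose_spec.2]
    have hP := used_isPort A hi
    right
    rw [(hdegPgr i).1 hP]
  · rw [hdeg_step_unused A hinj hdeg23 u i hi]
    by_cases hP : isPort i
    · left; exact (hdegPgr i).1 hP
    · right; exact (hdegPgr i).2 hP

include hinj hdeg23 in
lemma port_deg2 {u v : A.V} (hu : hdeg A.G u = 2) (h : A.G.Adj u v) :
    port A.G A.enc u v = 4 ∨ port A.G A.enc u v = 6 := by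
  have : usedPort A u (port A.G A.enc u v) := ⟨v, h, rfl⟩
  rw [used_deg2_iff A hinj hdeg23 hu] at this
  exact this

lemma deg3_nonempty {u : A.V} (hu : hdeg A.G u = 3) : ∃ v, A.G.Adj u v := by
  have : {w | A.G.Adj u w}.Nonempty := by
    apply Set.nonempty_of_ncard_ne_zero
    rw [← hdeg, hu]; omega
  exact this

end StepDeg

set_option linter.unusedSectionVars false

lemma bell {V : Type*} (G : SimpleGraph V) (t : V → ℕ) (h0 : ∀ w, hdeg G w = 2 → t w = 0)
    (h1 : ∀ a b, G.Adj a b → t a ≤ t b + 1) :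
    ∀ {a w : V}, hdeg G w = 2 → ∀ p : G.Walk a w, t a ≤ p.length := by
  intro a w hw p
  induction p with
  | nil => simp [h0 _ hw]
  | @cons a b w h q ih =>
    have h2 := h1 a b h
    have h3 := ih hw
    simp only [Walk.length_cons]
    omega

noncomputable def tf (A : GE) (φ : A.V → ℕ) (a : A.V × Fin 9) : ℕ :=
  sInf ({n | hdeg A.G a.1 = 2 ∧ n = dP 7 a.2} ∪
        {n | ∃ v, A.G.Adj a.1 v ∧ n = dP (port A.G A.enc a.1 v) a.2 + 4 * φ v + 4})

section TF
variable (A : GE) [Finite A.V] (φ : A.V → ℕ)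
variable (hinj : Function.Injective A.enc)
variable (hdeg23 : ∀ v, hdeg A.G v = 2 ∨ hdeg A.G v = 3)
variable (hP1 : ∀ w, hdeg A.G w = 2 → φ w = 0)
variable (hP2 : ∀ u v, A.G.Adj u v → φ u ≤ φ v + 1)
variable (hP3 : ∀ u, (hdeg A.G u = 2 ∧ φ u = 0) ∨ ∃ v, A.G.Adj u v ∧ φ v + 1 ≤ φ u)

lemma tf_le_left {u : A.V} (i : Fin 9) (h2 : hdeg A.G u = 2) : tf A φ (u, i) ≤ dP 7 i :=
  Nat.sInf_le (Or.inl ⟨h2, rfl⟩)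

lemma tf_le_right {u v : A.V} (i : Fin 9) (h : A.G.Adj u v) :
    tf A φ (u, i) ≤ dP (port A.G A.enc u v) i + 4 * φ v + 4 :=
  Nat.sInf_le (Or.inr ⟨v, h, rfl⟩)

include hdeg23 in
lemma tf_set_nonempty (u : A.V) (i : Fin 9) :
    ({n | hdeg A.G u = 2 ∧ n = dP 7 i} ∪
     {n | ∃ v, A.G.Adj u v ∧ n = dP (port A.G A.enc u v) i + 4 * φ v + 4}).Nonempty := by
  rcases hdeg23 u with h | h
  · exact ⟨dP 7 i, Or.inl ⟨h, rfl⟩⟩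
  · obtain ⟨v, hv⟩ := deg3_nonempty A h
    exact ⟨_, Or.inr ⟨v, hv, rfl⟩⟩

include hdeg23 in
lemma tf_mem (u : A.V) (i : Fin 9) :
    tf A φ (u, i) ∈
      ({n | hdeg A.G u = 2 ∧ n = dP 7 i} ∪
       {n | ∃ v, A.G.Adj u v ∧ n = dP (port A.G A.enc u v) i + 4 * φ v + 4}) :=
  Nat.sInf_mem (tf_set_nonempty A φ hdeg23 u i)

include hinj hdeg23 hP1 in
lemma tf_zero (w : A.V × Fin 9) (h : hdeg (step A).G w = 2) : tf A φ w = 0 := by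
  obtain ⟨w1, w2⟩ := w
  obtain ⟨h2, rfl⟩ := (hdeg_step_two_iff A hinj hdeg23 w1 w2).1 h
  have := tf_le_left A φ (7 : Fin 9) h2
  have hz : dP 7 (7 : Fin 9) = 0 := by decide
  omega

include hinj hdeg23 hP1 hP2 hP3 in
lemma tf_lip : ∀ a b, (step A).G.Adj a b → tf A φ a ≤ tf A φ b + 1 := by
  rintro ⟨u, i⟩ ⟨v', j⟩ h
  rcases (step_adj A _ _).1 h with ⟨heq, hij⟩ | ⟨hadj, hi, hj⟩
  · simp only at heq hij
    subst heq
    rcases tf_mem A φ hdeg23 u j with ⟨h2, heq2⟩ | ⟨v, hv, heq2⟩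
    · have := tf_le_left A φ i h2
      have := dlip 7 i j (by right; right; rfl) hij
      omega
    · have := tf_le_right A φ (v := v) i hv
      have := dlip (port A.G A.enc u v) i j (port_isPort A u v) hij
      omega
  · simp only at hadj hi hj
    have h0 : dP (port A.G A.enc u v') i = 0 := by
      rw [hi]; exact (dzero _ _ (port_isPort A u v')).2 rfl
    have hle := tf_le_right A φ (v := v') i hadj
    rcases tf_mem A φ hdeg23 v' j with ⟨h2, heq2⟩ | ⟨v, hv, heq2⟩
    · -- endpoint copy has degree 2; its used port is 4 or 6, at distance 3 from 7
      have hq : j = 4 ∨ j = 6 := by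
        rw [hj]; exact port_deg2 A hinj hdeg23 h2 hadj.symm
      have h3 : dP 7 j = 3 := by rcases hq with rfl | rfl <;> decide
      have hφ : φ v' = 0 := hP1 _ h2
      omega
    · by_cases hvu : v = u
      · subst hvu
        have h0' : dP (port A.G A.enc v' v) j = 0 := by
          rw [hj]; exact (dzero _ _ (port_isPort A v' v)).2 rfl
        -- need tf (v,i) ≤ 4 φ v + 5
        rcases hP3 v with ⟨h2u, hzu⟩ | ⟨v'', hv'', hle''⟩
        · have := tf_le_left A φ i h2u
          have := dbound 7 i (by right; right; rfl)
          omega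
        · have := tf_le_right A φ (v := v'') i hv''
          have := dbound (port A.G A.enc v v'') i (port_isPort A v v'')
          omega
      · have h3 : dP (port A.G A.enc v' v) j = 3 := by
          rw [hj]
          exact dsep _ _ (port_isPort A v' v) (port_isPort A v' u)
            (port_inj_s17 A hinj hdeg23 hv hadj.symm hvu)
        have hφ := hP2 v' v hv
        omega

include hinj hdeg23 hP1 hP2 hP3 in
lemma tf_desc : ∀ a, (hdeg (step A).G a = 2 ∧ tf A φ a = 0) ∨
    ∃ b, (step A).G.Adj a b ∧ tf A φ b + 1 ≤ tf A φ a := by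
  rintro ⟨u, i⟩
  rcases tf_mem A φ hdeg23 u i with ⟨h2, heq⟩ | ⟨v, hv, heq⟩
  · by_cases hi7 : i = 7
    · subst hi7
      left
      refine ⟨(hdeg_step_two_iff A hinj hdeg23 u 7).2 ⟨h2, rfl⟩, ?_⟩
      have := tf_le_left A φ (7 : Fin 9) h2
      have hz : dP 7 (7 : Fin 9) = 0 := by decide
      omega
    · obtain ⟨j, hadj, hjd⟩ := ddesc 7 i (by right; right; rfl)
        (fun hz => hi7 ((dzero 7 i (by right; right; rfl)).1 hz))
      refine Or.inr ⟨(u, j), Or.inl ⟨rfl, hadj⟩, ?_⟩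
      have := tf_le_left A φ j h2
      omega
  · by_cases hz : dP (port A.G A.enc u v) i = 0
    · have hip : i = port A.G A.enc u v := (dzero _ _ (port_isPort A u v)).1 hz
      refine Or.inr ⟨(v, port A.G A.enc v u), Or.inr ⟨hv, hip, rfl⟩, ?_⟩
      have hb : tf A φ (v, port A.G A.enc v u) ≤ 4 * φ v + 3 := by
        rcases hP3 v with ⟨h2v, hzv⟩ | ⟨v'', hv'', hle''⟩
        · have := tf_le_left A φ (port A.G A.enc v u) h2v
          have := dbound 7 (port A.G A.enc v u) (by right; right; rfl)
          omega
        · have := tf_le_right A φ (v := v'') (port A.G A.enc v u) hv''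
          have := dbound (port A.G A.enc v v'') (port A.G A.enc v u) (port_isPort A v v'')
          omega
      omega
    · obtain ⟨j, hadj, hjd⟩ := ddesc (port A.G A.enc u v) i (port_isPort A u v) hz
      refine Or.inr ⟨(u, j), Or.inl ⟨rfl, hadj⟩, ?_⟩
      have := tf_le_right A φ (v := v) j hv
      omega

include hinj hdeg23 hP1 hP2 in
lemma tf_lower {u w : A.V} (d : ℕ) (hd : 1 ≤ d) (hadj : A.G.Adj u w)
    (hφu : φ u = d) (hφw : φ w = d) :
    4 * d + 3 ≤ tf A φ (u, port A.G A.enc u w) := by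
  refine le_csInf ⟨_, Or.inr ⟨w, hadj, rfl⟩⟩ ?_
  rintro n (⟨h2, rfl⟩ | ⟨v, hv, rfl⟩)
  · have := hP1 u h2
    omega
  · have hφv := hP2 u v hv
    by_cases hvw : v = w
    · subst hvw
      rw [(dzero _ _ (port_isPort A u v)).2 rfl]
      omega
    · have hne : port A.G A.enc u v ≠ port A.G A.enc u w :=
        port_inj_s17 A hinj hdeg23 hv hadj hvw
      rw [dsep _ _ (port_isPort A u v) (port_isPort A u w) hne]
      omega

end TF

section Walks
variable (A : GE)

/-- embed a walk of `Pgr` into the copy of `P` over `u`. -/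
def embedW (u : A.V) : ∀ {i j : Fin 9}, Pgr.Walk i j → (step A).G.Walk (u, i) (u, j)
  | _, _, Walk.nil => Walk.nil
  | i, j, @Walk.cons _ _ _ c _ h w =>
    Walk.cons (show (step A).G.Adj (u, i) (u, c) from Or.inl ⟨rfl, h⟩) (embedW u w)

@[simp] lemma embedW_length (u : A.V) {i j : Fin 9} (w : Pgr.Walk i j) :
    (embedW A u w).length = w.length := by
  induction w with
  | nil => rfl
  | cons h w ih => simp [embedW, ih]; exact congrArg (· + 1) ih

@[simp] lemma embedW_support (u : A.V) {i j : Fin 9} (w : Pgr.Walk i j) :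
    (embedW A u w).support = w.support.map (fun j => (u, j)) := by
  induction w with
  | nil => rfl
  | cons h w ih => simp [embedW, ih]; exact congrArg (List.cons _) ih

/-- lift a walk of the base graph to the inflation, with controlled length. -/
lemma liftW {u w : A.V} (q : A.G.Walk u w) (i : Fin 9) :
    ∃ p : (step A).G.Walk (u, i) (w, 7), p.length ≤ 4 * q.length + 3 := by
  induction q generalizing i with
  | nil =>
    obtain ⟨w0, hw0⟩ := exists_walk_dP 7 (by right; right; rfl) i
    refine ⟨embedW A _ w0, ?_⟩
    have := dbound 7 i (by right; right; rfl)
    simp only [embedW_length, hw0, Walk.length_nil]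
    omega
  | @cons u x w h q ih =>
    obtain ⟨w0, hw0⟩ := exists_walk_dP (port A.G A.enc u x) (port_isPort A u x) i
    obtain ⟨p2, hp2⟩ := ih (port A.G A.enc x u)
    refine ⟨(embedW A u w0).append (Walk.cons (Or.inr ⟨h, rfl, rfl⟩) p2), ?_⟩
    erw [Walk.length_append, Walk.length_cons]
    have := dbound (port A.G A.enc u x) i (port_isPort A u x)
    simp only [embedW_length, hw0, Walk.length_cons]
    omega

/-- project a walk of the inflation down to the base graph. -/
lemma projW {a b : A.V × Fin 9} (p : (step A).G.Walk a b) :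
    ∃ q : A.G.Walk a.1 b.1, ∀ x ∈ q.support, x ∈ p.support.map Prod.fst := by
  induction p with
  | nil => exact ⟨Walk.nil, by simp; exact List.mem_singleton_self _⟩
  | @cons a c b h p ih =>
    obtain ⟨q, hq⟩ := ih
    rcases (step_adj A _ _).1 h with ⟨h1, -⟩ | ⟨h1, -, -⟩
    · refine ⟨q.copy h1.symm rfl, ?_⟩
      intro x hx
      rw [Walk.support_copy] at hx
      have := hq x hx
      erw [Walk.support_cons, List.map_cons]
      exact List.mem_cons_of_mem _ this
    · refine ⟨Walk.cons h1 q, ?_⟩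
      intro x hx
      rw [Walk.support_cons] at hx
      erw [Walk.support_cons, List.map_cons]
      rcases List.mem_cons.1 hx with rfl | hx
      · exact List.mem_cons_self
      · exact List.mem_cons_of_mem _ (hq x hx)

/-- lift a path of the base graph to a path in the inflation whose support
only covers the copies over the base path. -/
lemma liftPath {u w : A.V} (q : A.G.Walk u w) (hq : q.IsPath) (i : Fin 9) :
    ∃ p : (step A).G.Walk (u, i) (w, 7), p.IsPath ∧ ∀ x ∈ p.support, x.1 ∈ q.support := by
  induction q generalizing i with
  | nil =>
    obtain ⟨w0, -⟩ := exists_walk_dP 7 (by right; right; rfl) i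
    refine ⟨embedW A _ w0.bypass, ?_, ?_⟩
    · erw [Walk.isPath_def, embedW_support]
      exact (w0.bypass_isPath.support_nodup).map
        (fun a b hab => by simpa using congrArg Prod.snd hab)
    · intro x hx
      erw [embedW_support] at hx
      obtain ⟨j, -, rfl⟩ := List.mem_map.1 hx
      simp
  | @cons u x w h q ih =>
    obtain ⟨w0, -⟩ := exists_walk_dP (port A.G A.enc u x) (port_isPort A u x) i
    obtain ⟨p2, hp2, hsupp2⟩ := ih hq.of_cons (port A.G A.enc x u)
    have hu_not : u ∉ q.support := (Walk.cons_isPath_iff _ _).1 hq |>.2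
    refine ⟨(embedW A u w0.bypass).append (Walk.cons (Or.inr ⟨h, rfl, rfl⟩) p2), ?_, ?_⟩
    · erw [Walk.isPath_def, Walk.support_append]
      apply List.Nodup.append
      · erw [embedW_support]
        exact (w0.bypass_isPath.support_nodup).map
          (fun a b hab => by simpa using congrArg Prod.snd hab)
      · erw [Walk.support_cons, List.tail_cons]
        exact hp2.support_nodup
      · intro y hy1 hy2
        erw [Walk.support_cons, List.tail_cons] at hy2
        erw [embedW_support] at hy1
        obtain ⟨j, -, rfl⟩ := List.mem_map.1 hy1
        exact hu_not (hsupp2 _ hy2)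
    · intro y hy
      erw [Walk.support_append] at hy
      rcases List.mem_append.1 hy with hy1 | hy2
      · erw [embedW_support] at hy1
        obtain ⟨j, -, rfl⟩ := List.mem_map.1 hy1
        simp
      · erw [Walk.support_cons, List.tail_cons] at hy2
        erw [Walk.support_cons]
        exact List.mem_cons_of_mem _ (hsupp2 _ hy2)

end Walks

structure PInv (A : GE) (d : ℕ) : Prop where
  fin : Finite A.V
  inj : Function.Injective A.enc
  deg : ∀ v, hdeg A.G v = 2 ∨ hdeg A.G v = 3
  up : ∀ u, ∃ w, hdeg A.G w = 2 ∧ ∃ p : A.G.Walk u w, p.length ≤ d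
  low : ∃ φ : A.V → ℕ, (∀ w, hdeg A.G w = 2 → φ w = 0) ∧
        (∀ u v, A.G.Adj u v → φ u ≤ φ v + 1) ∧
        (∀ u, (hdeg A.G u = 2 ∧ φ u = 0) ∨ ∃ v, A.G.Adj u v ∧ φ v + 1 ≤ φ u) ∧
        ∃ us v0, A.G.Adj us v0 ∧ φ us = d ∧ φ v0 = d

def np : Fin 9 → Fin 9 := ![4,6,7,4,4,7,6,7,6]

lemma np_spec : ∀ u, ¬ isPort u → (Pgr.Adj u (np u) ∧ isPort (np u)) := by decide
lemma np_dist : ∀ u, isPort (np u) ∧ dP (np u) u ≤ 1 := by decide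

lemma hdegPgr23 : ∀ v, hdeg Pgr v = 2 ∨ hdeg Pgr v = 3 := by
  intro v
  by_cases h : isPort v
  · exact Or.inl ((hdegPgr v).1 h)
  · exact Or.inr ((hdegPgr v).2 h)

lemma hdegPgr_two_iff (v : Fin 9) : hdeg Pgr v = 2 ↔ isPort v := by
  constructor
  · intro h
    by_contra hP
    have := (hdegPgr v).2 hP
    omega
  · exact (hdegPgr v).1

lemma inv_base : PInv (ItP 0) 1 := by
  show PInv ⟨Fin 9, Pgr, Fin.val⟩ 1
  constructor
  case fin => exact inferInstanceAs (Finite (Fin 9))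
  case inj => exact Fin.val_injective
  case deg => exact hdegPgr23
  case up =>
    intro u
    obtain ⟨hport, hd⟩ := np_dist u
    obtain ⟨p, hp⟩ := exists_walk_dP (np u) hport u
    exact ⟨np u, (hdegPgr _).1 hport, p, by omega⟩
  case low =>
    refine ⟨fun u => if isPort u then 0 else 1, ?_, ?_, ?_, 0, 1, ?_, ?_, ?_⟩
    · intro w hw
      simp only
      rw [if_pos ((hdegPgr_two_iff w).1 hw)]
    · intro u v _
      simp only
      split <;> split <;> omega
    · intro u
      by_cases h : isPort u
      · exact Or.inl ⟨(hdegPgr u).1 h, by simp only; rw [if_pos h]⟩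
      · obtain ⟨hadj, hport⟩ := np_spec u h
        exact Or.inr ⟨np u, hadj, by simp only; rw [if_pos hport, if_neg h]⟩
    · show Pgr.Adj 0 1
      decide
    · simp only
      rw [if_neg (by decide)]
    · simp only
      rw [if_neg (by decide)]

lemma inv_step (A : GE) (d : ℕ) (h : PInv A d) (hd : 1 ≤ d) : PInv (step A) (4 * d + 3) := by
  haveI := h.fin
  obtain ⟨φ, hP1, hP2, hP3, us, v0, hadj, hus, hv0⟩ := h.low
  have hup' : ∀ a : A.V × Fin 9, ∃ w, hdeg (step A).G w = 2 ∧
      ∃ p : (step A).G.Walk a w, p.length ≤ 4 * d + 3 := by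
    rintro ⟨u, i⟩
    obtain ⟨w, hw2, q, hq⟩ := h.up u
    obtain ⟨p, hp⟩ := liftW A q i
    exact ⟨(w, 7), (hdeg_step_two_iff A h.inj h.deg w 7).2 ⟨hw2, rfl⟩, p, by omega⟩
  constructor
  case fin => exact inferInstanceAs (Finite (A.V × Fin 9))
  case inj =>
    rintro ⟨u, i⟩ ⟨v, j⟩ hab
    have := Nat.pair_eq_pair.1 hab
    have h1 : u = v := h.inj this.1
    have h2 : i = j := Fin.val_injective this.2
    rw [h1, h2]
  case deg => rintro ⟨u, i⟩; exact hdeg_step_23 A h.inj h.deg u i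
  case up => exact hup'
  case low =>
    have htf_zero := tf_zero A φ h.inj h.deg hP1
    have htf_lip := tf_lip A φ h.inj h.deg hP1 hP2 hP3
    have htf_desc := tf_desc A φ h.inj h.deg hP1 hP2 hP3
    have htf_up : ∀ a, tf A φ a ≤ 4 * d + 3 := by
      intro a
      obtain ⟨w, hw2, p, hp⟩ := hup' a
      have := bell (step A).G (tf A φ) htf_zero htf_lip hw2 p
      omega
    refine ⟨tf A φ, htf_zero, htf_lip, htf_desc,
      (us, port A.G A.enc us v0), (v0, port A.G A.enc v0 us), Or.inr ⟨hadj, rfl, rfl⟩, ?_, ?_⟩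
    · exact le_antisymm (htf_up _) (tf_lower A φ h.inj h.deg hP1 hP2 d hd hadj hus hv0)
    · exact le_antisymm (htf_up _)
        (tf_lower A φ h.inj h.deg hP1 hP2 d hd hadj.symm hv0 hus)

lemma inv_all : ∀ k, PInv (ItP k) (2 ^ (2 * k + 1) - 1) := by
  intro k
  induction k with
  | zero => exact inv_base
  | succ k ih =>
    have h2 : (2:ℕ) ^ (2 * k + 1) ≥ 2 := by
      calc (2:ℕ) ^ (2 * k + 1) ≥ 2 ^ 1 := Nat.pow_le_pow_right (by norm_num) (by omega)
      _ = 2 := by norm_num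
    have heq : (2:ℕ) ^ (2 * (k + 1) + 1) = 4 * 2 ^ (2 * k + 1) := by ring
    have := inv_step (ItP k) _ ih (by omega)
    have harith : 4 * (2 ^ (2 * k + 1) - 1) + 3 = 2 ^ (2 * (k + 1) + 1) - 1 := by omega
    rw [harith] at this
    exact this



lemma ncard_support_path {V : Type*} {G : SimpleGraph V} {u w : V} (p : G.Walk u w)
    (hp : p.IsPath) : {x | x ∈ p.support}.ncard = p.length + 1 := by
  haveI := Classical.decEq V
  rw [show {x | x ∈ p.support} = ↑p.support.toFinset by ext x; simp, Set.ncard_coe_finset,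
    List.toFinset_card_of_nodup hp.support_nodup, Walk.length_support]

lemma image_fst_list {α β : Type*} (f : α → β) (l : List α) :
    f '' {x | x ∈ l} = {y | y ∈ l.map f} := by
  ext y
  simp [List.mem_map, eq_comm]

lemma upper_claim (A : GE) (d : ℕ) (h : PInv A d) (v : A.V × Fin 9) :
    ∃ (w : A.V × Fin 9) (α : (step A).G.Walk v w), α.IsPath ∧ hdeg (step A).G w = 2 ∧
      ((Prod.fst : A.V × Fin 9 → A.V) '' {x | x ∈ α.support}).ncard ≤ d + 1 := by
  haveI := h.fin
  haveI := Classical.decEq A.V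
  obtain ⟨u, i⟩ := v
  obtain ⟨w, hw2, q0, hq0⟩ := h.up u
  obtain ⟨p, hpath, hsupp⟩ := liftPath A q0.bypass q0.bypass_isPath i
  refine ⟨(w, 7), p, hpath, (hdeg_step_two_iff A h.inj h.deg w 7).2 ⟨hw2, rfl⟩, ?_⟩
  have hsub : ((Prod.fst : A.V × Fin 9 → A.V) '' {x | x ∈ p.support}) ⊆
      {y | y ∈ q0.bypass.support} := by
    rintro y ⟨x, hx, rfl⟩
    exact hsupp x hx
  calc ((Prod.fst : A.V × Fin 9 → A.V) '' {x | x ∈ p.support}).ncard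
      ≤ {y | y ∈ q0.bypass.support}.ncard := Set.ncard_le_ncard hsub (Set.toFinite _)
    _ = q0.bypass.length + 1 := ncard_support_path _ q0.bypass_isPath
    _ ≤ d + 1 := by have := q0.length_bypass_le; omega

lemma lower_claim (A : GE) (d : ℕ) (φ : A.V → ℕ) (hfin : Finite A.V)
    (hinj : Function.Injective A.enc) (hdeg23 : ∀ v, hdeg A.G v = 2 ∨ hdeg A.G v = 3)
    (hP1 : ∀ w, hdeg A.G w = 2 → φ w = 0) (hP2 : ∀ u v, A.G.Adj u v → φ u ≤ φ v + 1)
    {us : A.V} (hus : d ≤ φ us) (i0 : Fin 9) (w : A.V × Fin 9)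
    (α : (step A).G.Walk (us, i0) w) (hw2 : hdeg (step A).G w = 2) :
    d + 1 ≤ ((Prod.fst : A.V × Fin 9 → A.V) '' {x | x ∈ α.support}).ncard := by
  haveI := hfin
  haveI := Classical.decEq A.V
  obtain ⟨q, hq⟩ := projW A α
  obtain ⟨w1, w2⟩ := w
  have hw21 : hdeg A.G w1 = 2 := ((hdeg_step_two_iff A hinj hdeg23 w1 w2).1 hw2).1
  have hlen : d ≤ q.bypass.length := le_trans hus (bell A.G φ hP1 hP2 hw21 q.bypass)
  have h1 : {x | x ∈ q.bypass.support} ⊆ (Prod.fst : A.V × Fin 9 → A.V) '' {x | x ∈ α.support} := by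
    intro x hx
    have hx2 := q.support_bypass_subset hx
    erw [image_fst_list]
    exact hq x hx2
  calc d + 1 ≤ q.bypass.length + 1 := by omega
    _ = {x | x ∈ q.bypass.support}.ncard := (ncard_support_path _ q.bypass_isPath).symm
    _ ≤ _ := Set.ncard_le_ncard h1 (Set.toFinite _)


/-- `p₀ = 1` and `p_{k+1} = 2^{2k+1}`, where `p_k` is the maximum
over vertices `v` of `Pᵏ` of the minimum, over paths `α` from `v` to the set of
2-valent vertices, of the number of distinct copies of `P` met by `α` (the copies
of `P` in `P^{k+1}` being the fibers of the projection `Prod.fst`). -/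
theorem stmt_17 (k : ℕ) :
    (sSup (Set.range fun v : (ItP 0).V =>
        sInf { n : ℕ | ∃ (w : (ItP 0).V) (α : (ItP 0).G.Walk v w), α.IsPath ∧
          hdeg (ItP 0).G w = 2 ∧
          n = ((fun _ => ()) '' {x | x ∈ α.support}).ncard }) = 1) ∧
    sSup (Set.range fun v : (ItP (k + 1)).V =>
        sInf { n : ℕ | ∃ (w : (ItP (k + 1)).V) (α : (ItP (k + 1)).G.Walk v w), α.IsPath ∧
          hdeg (ItP (k + 1)).G w = 2 ∧
          n = ((Prod.fst : (ItP k).V × Fin 9 → (ItP k).V) ''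
                {x : (ItP k).V × Fin 9 | x ∈ α.support}).ncard }) = 2 ^ (2 * k + 1) := by
  constructor
  · -- part 1: the base case quantity equals 1
    haveI : Nonempty (ItP 0).V := ⟨show Fin 9 from 4⟩
    haveI := Classical.decEq (ItP 0).V
    have h1 : ∀ v : (ItP 0).V,
        sInf { n : ℕ | ∃ (w : (ItP 0).V) (α : (ItP 0).G.Walk v w), α.IsPath ∧
          hdeg (ItP 0).G w = 2 ∧
          n = ((fun _ => ()) '' {x | x ∈ α.support}).ncard } = 1 := by
      intro v
      have himg : ∀ (w : (ItP 0).V) (α : (ItP 0).G.Walk v w),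
          ((fun _ => ()) '' {x | x ∈ α.support}).ncard = 1 := by
        intro w α
        have hne : {x | x ∈ α.support}.Nonempty :=
          ⟨v, show v ∈ {x | x ∈ α.support} from α.start_mem_support⟩
        rw [Set.Nonempty.image_const hne ()]
        exact Set.ncard_singleton _
      have hset : { n : ℕ | ∃ (w : (ItP 0).V) (α : (ItP 0).G.Walk v w), α.IsPath ∧
          hdeg (ItP 0).G w = 2 ∧
          n = ((fun _ => ()) '' {x | x ∈ α.support}).ncard } = {1} := by
        ext n
        simp only [Set.mem_setOf_eq, Set.mem_singleton_iff]
        constructor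
        · rintro ⟨w, α, -, -, rfl⟩
          exact himg w α
        · rintro rfl
          obtain ⟨w, hw2, q, hq⟩ := inv_base.up v
          exact ⟨w, q.bypass, q.bypass_isPath, hw2, (himg _ _).symm⟩
      rw [hset]
      exact csInf_singleton 1
    simp only [h1, Set.range_const]
    exact csSup_singleton 1
  · -- part 2
    haveI := (inv_all k).fin
    obtain ⟨φ, hP1, hP2, hP3, us, v0, hadjuv, hus, hv0⟩ := (inv_all k).low
    have hd2 : (2:ℕ) ≤ 2 ^ (2 * k + 1) := by
      calc (2:ℕ) = 2 ^ 1 := by norm_num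
        _ ≤ 2 ^ (2 * k + 1) := Nat.pow_le_pow_right (by norm_num) (by omega)
    apply le_antisymm
    · apply csSup_le
      · exact ⟨_, Set.mem_range_self (((us, 0) : (ItP k).V × Fin 9) : (ItP (k+1)).V)⟩
      · rintro n ⟨v, rfl⟩
        obtain ⟨w, α, hp, h2, hle⟩ := upper_claim (ItP k) _ (inv_all k) v
        exact le_trans (Nat.sInf_le ⟨w, α, hp, h2, rfl⟩) (le_trans hle (by omega))
    · apply le_csSup
      · refine ⟨2 ^ (2 * k + 1), ?_⟩
        rintro n ⟨v, rfl⟩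
        obtain ⟨w, α, hp, h2, hle⟩ := upper_claim (ItP k) _ (inv_all k) v
        exact le_trans (Nat.sInf_le ⟨w, α, hp, h2, rfl⟩) (le_trans hle (by omega))
      · refine ⟨((us, 0) : (ItP k).V × Fin 9), ?_⟩
        apply le_antisymm
        · obtain ⟨w, α, hp, h2, hle⟩ := upper_claim (ItP k) _ (inv_all k) (us, 0)
          have hge := lower_claim (ItP k) _ φ (inv_all k).fin (inv_all k).inj (inv_all k).deg
            hP1 hP2 (le_of_eq hus.symm) 0 w α h2
          exact le_trans (Nat.sInf_le ⟨w, α, hp, h2, rfl⟩) (le_trans hle (by omega))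
        · apply le_csInf
          · obtain ⟨w, α, hp, h2, hle⟩ := upper_claim (ItP k) _ (inv_all k) (us, 0)
            exact ⟨_, ⟨w, α, hp, h2, rfl⟩⟩
          · rintro n ⟨w, α, hp, h2, rfl⟩
            have := lower_claim (ItP k) _ φ (inv_all k).fin (inv_all k).inj (inv_all k).deg
              hP1 hP2 (le_of_eq hus.symm) 0 w α h2
            exact le_trans (by omega) this
end
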